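/- arXiv:1908.06200 — 5 statements merged into one kernel-verified Lean document; each statement's English description precedes it below -/
import Mathlib

section
/- Let X be a continuum and U ⊆ X a connected subset. Then C(U) := {A ∈ C(X) : A ⊆ U} is a connected subset of C(X). -/
open TopologicalSpace Set

/-- The hyperspace of subcontinua of `X`. -/
abbrev Hyp (X : Type*) [MetricSpace X] : Type _ :=
  {A : NonemptyCompacts X // IsConnected (A : Set X)}

variable {X : Type*} [MetricSpace X]

/-- `C(p,X)`, the subcontinua containing `p`, as a subset of `Hyp X`. -/
def CpSet (p : X) : Set (Hyp X) := {A | p ∈ (A.1 : Set X)}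

/-- The setoid collapsing `C(p,X)` to a point. -/
def hsSetoid (p : X) : Setoid (Hyp X) where
  r A B := A = B ∨ (A ∈ CpSet p ∧ B ∈ CpSet p)
  iseqv := by
    constructor
    · intro A; exact Or.inl rfl
    · rintro A B (rfl | h); exacts [Or.inl rfl, Or.inr ⟨h.2, h.1⟩]
    · rintro A B C (rfl | h) (rfl | h')
      exacts [Or.inl rfl, Or.inr h', Or.inr h, Or.inr ⟨h.1, h'.2⟩]

/-- The hyperspace `HS(p,X) = C(X)/C(p,X)`. -/
abbrev HS (p : X) : Type _ := Quotient (hsSetoid p)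

/-- The quotient map `π_p^X`. -/
def hsMk (p : X) : Hyp X → HS p := Quotient.mk (hsSetoid p)

/-- The singleton `{p}` as a subcontinuum. -/
def singHyp (p : X) : Hyp X :=
  ⟨⟨⟨{p}, isCompact_singleton⟩, Set.singleton_nonempty p⟩, isConnected_singleton⟩

/-- The distinguished point `C_p^X` of `HS(p,X)`. -/
def CpPoint (p : X) : HS p := hsMk p (singHyp p)

/-- In a compact connected T2 space, the connected component of a point in a proper
closed subset meets the frontier of that subset (boundary bumping core). -/
lemma aux_comp_frontier {Y : Type*} [TopologicalSpace Y] [T2Space Y] [CompactSpace Y]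
    [PreconnectedSpace Y] {K : Set Y} (hK : IsClosed K) (hKne : K ≠ univ) {x : Y} (hx : x ∈ K) :
    (connectedComponentIn K x ∩ frontier K).Nonempty := by
  by_contra hemp
  rw [Set.not_nonempty_iff_eq_empty] at hemp
  haveI : CompactSpace K := isCompact_iff_compactSpace.mp hK.isCompact
  set x' : K := ⟨x, hx⟩ with hx'def
  have hcc : connectedComponentIn K x = Subtype.val '' connectedComponent x' :=
    connectedComponentIn_eq_image hx
  have hiInter := connectedComponent_eq_iInter_isClopen x'
  set F : Set K := Subtype.val ⁻¹' frontier K with hF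
  have hFc : IsCompact F := (isClosed_frontier.preimage continuous_subtype_val).isCompact
  have hdisj : (F ∩ ⋂ s : {s : Set K // IsClopen s ∧ x' ∈ s}, (s : Set K)) = ∅ := by
    rw [← hiInter]
    ext z
    simp only [mem_inter_iff, mem_empty_iff_false, iff_false, not_and]
    intro hz1 hz2
    have hzin : (z : Y) ∈ connectedComponentIn K x ∩ frontier K :=
      ⟨hcc ▸ ⟨z, hz2, rfl⟩, hz1⟩
    rw [hemp] at hzin
    exact hzin
  obtain ⟨t, ht⟩ := hFc.elim_finite_subfamily_closed _ (fun s => s.2.1.1) hdisj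
  set D : Set K := ⋂ s ∈ t, (s : Set K) with hD
  have hDclopen : IsClopen D := isClopen_biInter_finset fun s _ => s.2.1
  have hxD : x' ∈ D := mem_iInter₂.mpr fun s _ => s.2.2
  set D₀ : Set Y := Subtype.val '' D with hD₀
  have hD₀K : D₀ ⊆ K := by rintro _ ⟨z, _, rfl⟩; exact z.2
  have hD₀F : ∀ z ∈ D₀, z ∉ frontier K := by
    rintro _ ⟨w, hw, rfl⟩ hz
    have : w ∈ F ∩ ⋂ s ∈ t, (s : Set K) := ⟨hz, hw⟩
    rw [ht] at this
    exact this
  have hD₀int : D₀ ⊆ interior K := by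
    intro z hz
    by_contra h
    exact hD₀F z hz (by rw [hK.frontier_eq]; exact ⟨hD₀K hz, h⟩)
  -- D₀ is open in Y
  obtain ⟨O, hOopen, hOD⟩ := isOpen_induced_iff.mp hDclopen.2
  have hD₀eq : D₀ = O ∩ K := by
    rw [hD₀, ← hOD, Subtype.image_preimage_coe, inter_comm]
  have hD₀open : IsOpen D₀ := by
    have : D₀ = O ∩ interior K := by
      apply Subset.antisymm
      · exact subset_inter (hD₀eq ▸ inter_subset_left) hD₀int
      · rw [hD₀eq]; exact inter_subset_inter_right _ interior_subset
    rw [this]; exact hOopen.inter isOpen_interior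
  have hD₀closed : IsClosed D₀ :=
    ((hDclopen.1.isCompact).image continuous_subtype_val).isClosed
  rcases isClopen_iff.mp ⟨hD₀closed, hD₀open⟩ with h | h
  · exact absurd (h ▸ ⟨x', hxD, rfl⟩ : x ∈ (∅ : Set Y)) (notMem_empty x)
  · exact hKne (univ_subset_iff.mp (h ▸ hD₀K))

/-- Boundary bumping: a proper subcontinuum of a continuum can be enlarged strictly
while staying within any `ε`-neighbourhood. -/
lemma aux_bump [CompactSpace X] {A M : Set X} (hAc : IsConnected A) (hAcl : IsClosed A)
    (hMc : IsConnected M) (hMA : M ⊆ A) (hne : M ≠ A) {ε : ℝ} (hε : 0 < ε) :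
    ∃ B : Set X, IsClosed B ∧ IsConnected B ∧ M ⊆ B ∧ M ≠ B ∧ B ⊆ A ∧
      ∀ x ∈ B, Metric.infDist x M ≤ ε := by
  haveI : CompactSpace A := isCompact_iff_compactSpace.mp hAcl.isCompact
  haveI : PreconnectedSpace A := Subtype.preconnectedSpace hAc.isPreconnected
  obtain ⟨m, hm⟩ := hMc.nonempty
  have hMne : M.Nonempty := ⟨m, hm⟩
  set g : A → ℝ := fun z => Metric.infDist (z : X) M with hg
  have hgc : Continuous g := (Metric.continuous_infDist_pt M).comp continuous_subtype_val
  set K : Set A := {z | g z ≤ ε} with hK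
  have hKcl : IsClosed K := isClosed_le hgc continuous_const
  have hMg : ∀ z : A, (z : X) ∈ M → g z = 0 := fun z hz => Metric.infDist_zero_of_mem hz
  set x' : A := ⟨m, hMA hm⟩ with hx'
  have hx'K : x' ∈ K := by
    show g x' ≤ ε
    rw [hMg x' hm]; exact le_of_lt hε
  by_cases hKuniv : K = univ
  · refine ⟨A, hAcl, hAc, hMA, hne, subset_rfl, ?_⟩
    intro x hx
    have : (⟨x, hx⟩ : A) ∈ K := hKuniv ▸ mem_univ _
    exact this
  · obtain ⟨y, hyC, hyF⟩ := aux_comp_frontier hKcl hKuniv hx'K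
    set C : Set A := connectedComponentIn K x' with hC
    -- M (as a subset of A) lies in C
    haveI : ConnectedSpace M := Subtype.connectedSpace hMc
    have hM'conn : IsConnected {z : A | (z : X) ∈ M} := by
      rw [← Set.range_inclusion hMA]
      exact isConnected_range (continuous_inclusion hMA)
    have hM'K : {z : A | (z : X) ∈ M} ⊆ K := by
      intro z hz
      show g z ≤ ε
      rw [hMg z hz]; exact le_of_lt hε
    have hM'C : {z : A | (z : X) ∈ M} ⊆ C :=
      hM'conn.isPreconnected.subset_connectedComponentIn hm hM'K
    have hCconn : IsConnected C := isConnected_connectedComponentIn_iff.mpr hx'K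
    have hCK : C ⊆ K := connectedComponentIn_subset _ _
    have hclCK : closure C ⊆ K := hKcl.closure_subset_iff.mpr hCK
    set B : Set X := Subtype.val '' closure C with hB
    have hBcompact : IsCompact B :=
      (isClosed_closure.isCompact).image continuous_subtype_val
    have hBconn : IsConnected B :=
      (hCconn.closure).image _ continuous_subtype_val.continuousOn
    have hMB : M ⊆ B := fun z hz =>
      ⟨⟨z, hMA hz⟩, subset_closure (hM'C hz), rfl⟩
    have hBA : B ⊆ A := by rintro _ ⟨z, _, rfl⟩; exact z.2
    have hBinf : ∀ x ∈ B, Metric.infDist x M ≤ ε := by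
      rintro _ ⟨z, hz, rfl⟩
      exact hclCK hz
    -- the frontier point has infDist = ε
    have hyeps : g y = ε := by
      have h1 : g y ≤ ε := by
        have : y ∈ K := by rw [← hKcl.closure_eq]; exact hyF.1
        exact this
      have h2 : ¬ g y < ε := by
        intro hlt
        have : y ∈ interior K := by
          have hopen : IsOpen {z : A | g z < ε} := isOpen_lt hgc continuous_const
          have hsub : {z : A | g z < ε} ⊆ interior K :=
            hopen.subset_interior_iff.mpr (fun z (hz : g z < ε) => show g z ≤ ε from le_of_lt hz)
          exact hsub hlt
        exact hyF.2 this
      linarith [lt_or_ge (g y) ε |>.resolve_left h2, h1]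
    have hMneB : M ≠ B := by
      intro heq
      have hyB : (y : X) ∈ B := ⟨y, subset_closure hyC, rfl⟩
      rw [← heq] at hyB
      have : g y = 0 := hMg y hyB
      rw [hyeps] at this
      exact absurd this (ne_of_gt hε)
    exact ⟨B, hBcompact.isClosed, hBconn, hMB, hMneB, hBA, hBinf⟩

/-- `C(a, A)`, the subcontinua of `A` containing `a`, is preconnected. -/
lemma aux_CaA [CompactSpace X] (A : Hyp X) {a : X} (ha : a ∈ (A.1 : Set X)) :
    IsPreconnected {B : Hyp X | a ∈ (B.1 : Set X) ∧ (B.1 : Set X) ⊆ (A.1 : Set X)} := by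
  set s : Set (Hyp X) := {B : Hyp X | a ∈ (B.1 : Set X) ∧ (B.1 : Set X) ⊆ (A.1 : Set X)} with hs
  have hAs : A ∈ s := ⟨ha, subset_rfl⟩
  have hAcl : IsClosed (A.1 : Set X) := A.1.isCompact.isClosed
  -- key step, asymmetric in u v : if A ∈ u and s meets v, contradiction
  have key : ∀ u v : Set (Hyp X), IsOpen u → IsOpen v → s ⊆ u ∪ v →
      (s ∩ (u ∩ v)) = ∅ → A ∈ u → (s ∩ v).Nonempty → False := by
    intro u v hu hv hsuv hemp hAu ⟨B₀, hB₀s, hB₀v⟩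
    set 𝒮 : Set (Set X) := {E | ∃ C : Hyp X, (C.1 : Set X) = E ∧ C ∈ s ∧ C ∈ v} with h𝒮
    have hB₀𝒮 : (B₀.1 : Set X) ∈ 𝒮 := ⟨B₀, rfl, hB₀s, hB₀v⟩
    -- facts about members of 𝒮
    have hmem : ∀ E ∈ 𝒮, a ∈ E ∧ E ⊆ (A.1 : Set X) ∧ IsPreconnected E := by
      rintro E ⟨C, rfl, hCs, _⟩
      exact ⟨hCs.1, hCs.2, C.2.isPreconnected⟩
    -- chain condition for Zorn
    have hchain : ∀ c ⊆ 𝒮, IsChain (· ⊆ ·) c → c.Nonempty →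
        ∃ ub ∈ 𝒮, ∀ E ∈ c, E ⊆ ub := by
      intro c hc𝒮 hchain hcne
      obtain ⟨E₁, hE₁⟩ := hcne
      set Eu : Set X := closure (⋃₀ c) with hEu
      have hEucpt : IsCompact Eu := isClosed_closure.isCompact
      have haEu : a ∈ Eu := subset_closure ⟨E₁, hE₁, (hmem E₁ (hc𝒮 hE₁)).1⟩
      have hEuA : Eu ⊆ (A.1 : Set X) := by
        apply hAcl.closure_subset_iff.mpr
        exact sUnion_subset fun E hE => (hmem E (hc𝒮 hE)).2.1
      have hEuconn : IsConnected Eu := by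
        refine ⟨⟨a, haEu⟩, IsPreconnected.closure ?_⟩
        apply IsPreconnected.sUnion_directed hchain.directedOn
        exact fun E hE => (hmem E (hc𝒮 hE)).2.2
      set Cu : Hyp X := ⟨⟨⟨Eu, hEucpt⟩, ⟨a, haEu⟩⟩, hEuconn⟩ with hCu
      have hCus : Cu ∈ s := ⟨haEu, hEuA⟩
      have hub : ∀ E ∈ c, E ⊆ Eu := fun E hE => (subset_sUnion_of_mem hE).trans subset_closure
      -- show Cu ∈ v; otherwise Cu ∈ u, and some chain element is close to Cu
      have hCuv : Cu ∈ v := by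
        by_contra hCunv
        have hCuu : Cu ∈ u := (hsuv hCus).resolve_right hCunv
        obtain ⟨ε, hε, hball⟩ := Metric.isOpen_iff.mp hu Cu hCuu
        set δ : ℝ := ε / 2 with hδ
        have hδ0 : 0 < δ := by positivity
        -- finite subcover of Eu by δ/2 balls centred in Eu
        have hcover : Eu ⊆ ⋃ z ∈ Eu, Metric.ball z (δ / 2) := fun z hz =>
          mem_biUnion hz (Metric.mem_ball_self (by positivity))
        obtain ⟨b', hb'sub, hb'fin, hb'cover⟩ :=
          hEucpt.elim_finite_subcover_image (fun z _ => Metric.isOpen_ball) hcover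
        -- for each centre pick a point of ⋃₀ c nearby, and its containing chain element
        have hpick : ∀ z ∈ b', ∃ w ∈ ⋃₀ c, dist z w < δ / 2 := by
          intro z hz
          have hzEu : z ∈ Eu := hb'sub hz
          exact Metric.mem_closure_iff.mp hzEu _ (by positivity)
        choose! w hw hdw using hpick
        have hpick2 : ∀ z ∈ b', ∃ E ∈ c, w z ∈ E := by
          intro z hz
          obtain ⟨E, hE, hwE⟩ := hw z hz
          exact ⟨E, hE, hwE⟩
        choose! Ew hEwc hEwmem using hpick2
        -- a maximal element of the finite subfamily together with E₁
        set T : Set (Set X) := insert E₁ (Ew '' b') with hT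
        have hTc : T ⊆ c := by
          rintro E (rfl | ⟨z, hz, rfl⟩)
          · exact hE₁
          · exact hEwc z hz
        have hTfin : T.Finite := (hb'fin.image Ew).insert E₁
        have hTne : T.Nonempty := ⟨E₁, mem_insert _ _⟩
        obtain ⟨Em, hEmT, hEmmax⟩ := Set.Finite.exists_maximalFor id T hTfin hTne
        have hEmub : ∀ E ∈ T, E ⊆ Em := by
          intro E hE
          rcases hchain.total (hTc hEmT) (hTc hE) with h | h
          · have heq : Em = E := subset_antisymm h (hEmmax hE h)
            exact heq ▸ subset_rfl
          · exact h
        have hEmc : Em ∈ c := hTc hEmT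
        -- Hausdorff distance between Eu and Em is ≤ δ
        have hEmEu : Em ⊆ Eu := hub Em hEmc
        have hdist : Metric.hausdorffDist Eu Em ≤ δ := by
          apply Metric.hausdorffDist_le_of_mem_dist (le_of_lt hδ0)
          · intro x hx
            obtain ⟨z, hz, hxz⟩ := mem_iUnion₂.mp (hb'cover hx)
            refine ⟨w z, hEmub (Ew z) (mem_insert_of_mem _ ⟨z, hz, rfl⟩) (hEwmem z hz), ?_⟩
            calc dist x (w z) ≤ dist x z + dist z (w z) := dist_triangle _ _ _
              _ ≤ δ / 2 + δ / 2 := add_le_add (le_of_lt (Metric.mem_ball.mp hxz))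
                  (le_of_lt (hdw z hz))
              _ = δ := by ring
          · intro y hy
            exact ⟨y, hEmEu hy, by simpa using hδ0.le⟩
        -- the Hyp element corresponding to Em is in the ball around Cu
        obtain ⟨CEm, hCEmcarrier, hCEms, hCEmv⟩ := hc𝒮 hEmc
        have hdist2 : dist Cu CEm < ε := by
          have : dist Cu CEm = Metric.hausdorffDist Eu (CEm.1 : Set X) := rfl
          rw [this, hCEmcarrier]
          calc Metric.hausdorffDist Eu Em ≤ δ := hdist
            _ < ε := by rw [hδ]; linarith
        have hCEmu : CEm ∈ u := hball (Metric.mem_ball'.mpr hdist2)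
        have : CEm ∈ s ∩ (u ∩ v) := ⟨hCEms, hCEmu, hCEmv⟩
        rw [hemp] at this
        exact this
      exact ⟨Eu, ⟨Cu, rfl, hCus, hCuv⟩, hub⟩
    obtain ⟨M, hB₀M, hMmax⟩ := zorn_subset_nonempty 𝒮 hchain _ hB₀𝒮
    obtain ⟨CM, hCMcarrier, hCMs, hCMv⟩ := hMmax.prop
    -- M ≠ A since A ∈ u and s ∩ u ∩ v = ∅
    have hMA : M ⊆ (A.1 : Set X) := hCMcarrier ▸ hCMs.2
    have hMneA : M ≠ (A.1 : Set X) := by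
      intro heq
      have : CM = A := by
        apply Subtype.ext
        apply NonemptyCompacts.ext
        rw [hCMcarrier, heq]
      rw [this] at hCMv hCMs
      have : A ∈ s ∩ (u ∩ v) := ⟨hCMs, hAu, hCMv⟩
      rw [hemp] at this
      exact this
    -- bump M to a strictly larger subcontinuum close to it, contradicting maximality
    obtain ⟨ε, hε, hball⟩ := Metric.isOpen_iff.mp hv CM hCMv
    have hMconn : IsConnected M := hCMcarrier ▸ CM.2
    obtain ⟨B, hBcl, hBconn, hMB, hMneB, hBA, hBinf⟩ :=
      aux_bump A.2 hAcl hMconn hMA hMneA (half_pos hε)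
    have hBcpt : IsCompact B := hBcl.isCompact
    have haB : a ∈ B := hMB (hCMcarrier ▸ hCMs.1)
    set CB : Hyp X := ⟨⟨⟨B, hBcpt⟩, ⟨a, haB⟩⟩, hBconn⟩ with hCB
    have hCBs : CB ∈ s := ⟨haB, hBA⟩
    have hdistB : dist CB CM < ε := by
      have heq : dist CB CM = Metric.hausdorffDist B M := by
        have : dist CB CM = Metric.hausdorffDist B (CM.1 : Set X) := rfl
        rw [this, hCMcarrier]
      rw [heq]
      have hMne : M.Nonempty := hMconn.nonempty
      have h1 : Metric.hausdorffDist B M ≤ ε / 2 := by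
        apply Metric.hausdorffDist_le_of_infDist (le_of_lt (half_pos hε))
        · exact hBinf
        · intro x hx
          rw [Metric.infDist_zero_of_mem (hMB hx)]
          exact le_of_lt (half_pos hε)
      linarith
    have hCBv : CB ∈ v := hball (Metric.mem_ball.mpr hdistB)
    have hB𝒮 : B ∈ 𝒮 := ⟨CB, rfl, hCBs, hCBv⟩
    exact hMneB (subset_antisymm hMB (hMmax.2 hB𝒮 hMB))
  -- now the symmetric argument
  intro u v hu hv hsuv hsu hsv
  by_contra hemp
  rw [Set.not_nonempty_iff_eq_empty] at hemp
  rcases hsuv hAs with hAu | hAv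
  · exact key u v hu hv hsuv hemp hAu hsv
  · apply key v u hv hu (by rwa [union_comm]) (by rwa [inter_comm v u]) hAv hsu

lemma aux_sing_continuous : Continuous (fun a : X => singHyp a) := by
  apply LipschitzWith.continuous (K := 1)
  apply LipschitzWith.of_dist_le_mul
  intro a b
  rw [NNReal.coe_one, one_mul]
  have : dist (singHyp a) (singHyp b) = Metric.hausdorffDist ({a} : Set X) ({b} : Set X) := rfl
  rw [this]
  apply Metric.hausdorffDist_le_of_mem_dist dist_nonneg
  · intro x hx
    rw [mem_singleton_iff] at hx
    exact ⟨b, rfl, by rw [hx]⟩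
  · intro y hy
    rw [mem_singleton_iff] at hy
    exact ⟨a, rfl, by rw [hy, dist_comm]⟩

theorem stmt3 [CompactSpace X] [ConnectedSpace X] [Nontrivial X] (U : Set X) (hU : IsConnected U) :
    IsConnected {A : Hyp X | (A.1 : Set X) ⊆ U} := by
  obtain ⟨p, hp⟩ := hU.nonempty
  constructor
  · exact ⟨singHyp p, by simpa [singHyp] using hp⟩
  · set S₀ : Set (Hyp X) := (fun a : X => singHyp a) '' U with hS₀
    have hS₀conn : IsPreconnected S₀ :=
      hU.isPreconnected.image _ aux_sing_continuous.continuousOn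
    have hS₀sub : S₀ ⊆ {A : Hyp X | (A.1 : Set X) ⊆ U} := by
      rintro _ ⟨a, ha, rfl⟩
      exact singleton_subset_iff.mpr ha
    apply isPreconnected_of_forall_pair
    intro A hA B hB
    obtain ⟨a, haA⟩ := A.2.nonempty
    obtain ⟨b, hbB⟩ := B.2.nonempty
    set TA : Set (Hyp X) := {C : Hyp X | a ∈ (C.1 : Set X) ∧ (C.1 : Set X) ⊆ (A.1 : Set X)}
    set TB : Set (Hyp X) := {C : Hyp X | b ∈ (C.1 : Set X) ∧ (C.1 : Set X) ⊆ (B.1 : Set X)}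
    have hTAconn := aux_CaA A haA
    have hTBconn := aux_CaA B hbB
    have hTAsub : TA ⊆ {C : Hyp X | (C.1 : Set X) ⊆ U} := fun C hC => hC.2.trans hA
    have hTBsub : TB ⊆ {C : Hyp X | (C.1 : Set X) ⊆ U} := fun C hC => hC.2.trans hB
    have haU : a ∈ U := hA haA
    have hbU : b ∈ U := hB hbB
    have hsingA : singHyp a ∈ TA ∩ S₀ :=
      ⟨⟨rfl, singleton_subset_iff.mpr haA⟩, ⟨a, haU, rfl⟩⟩
    have hsingB : singHyp b ∈ S₀ ∩ TB :=
      ⟨⟨b, hbU, rfl⟩, ⟨rfl, singleton_subset_iff.mpr hbB⟩⟩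
    refine ⟨(TA ∪ S₀) ∪ TB, ?_, Or.inl (Or.inl ⟨haA, subset_rfl⟩),
      Or.inr ⟨hbB, subset_rfl⟩, ?_⟩
    · exact union_subset (union_subset hTAsub hS₀sub) hTBsub
    · apply IsPreconnected.union' ⟨singHyp b, Or.inr hsingB.1, hsingB.2⟩
      · exact IsPreconnected.union' ⟨singHyp a, hsingA.1, hsingA.2⟩ hTAconn hS₀conn
      · exact hTBconn
end

section
/- Let X be a continuum and p ∈ X. Then p is a cut point of X (i.e., X \ {p} is disconnected) if and only if C_p^X is a cut point of HS(p,X) (i.e., HS(p,X) \ {C_p^X} is disconnected). -/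
open TopologicalSpace Set

variable {X : Type*} [MetricSpace X]

section AuxLemmas
open Metric


/-- Boundary bumping: in a compact T2 preconnected space, the connected component of a point
in a closed set `E ≠ univ` meets the closure of the complement. -/
lemma bb {Y : Type*} [TopologicalSpace Y] [CompactSpace Y] [T2Space Y] [PreconnectedSpace Y]
    {E : Set Y} (hE : IsClosed E) {x : Y} (hx : x ∈ E) (hne : Eᶜ.Nonempty) :
    ∃ y ∈ connectedComponentIn E x, y ∈ closure Eᶜ := by
  by_contra h
  push_neg at h
  have hEc : CompactSpace E := isCompact_iff_compactSpace.mp hE.isCompact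
  set x' : E := ⟨x, hx⟩
  have hcc := connectedComponent_eq_iInter_isClopen x'
  set K' : Set E := Subtype.val ⁻¹' (closure Eᶜ) with hK'
  have hK'c : IsCompact K' := (IsClosed.preimage continuous_subtype_val isClosed_closure).isCompact
  have hdisj : K' ∩ ⋂ s : { s : Set E // IsClopen s ∧ x' ∈ s }, (s : Set E) = ∅ := by
    rw [← hcc]
    ext y'
    simp only [mem_inter_iff, mem_empty_iff_false, iff_false, not_and]
    intro hy1 hy2
    exact h y' ((connectedComponentIn_eq_image hx) ▸ ⟨y', hy2, rfl⟩) hy1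
  obtain ⟨u, hu⟩ := hK'c.elim_finite_subfamily_closed _ (fun s => s.2.1.1) hdisj
  set D' : Set E := ⋂ s ∈ u, (s : Set E) with hD'
  have hD'clopen : IsClopen D' := isClopen_biInter_finset (fun s _ => s.2.1)
  have hxD' : x' ∈ D' := mem_iInter₂.mpr fun s _ => s.2.2
  have hDK' : D' ∩ K' = ∅ := by rw [inter_comm]; exact hu
  set D : Set Y := Subtype.val '' D' with hD
  have hDE : D ⊆ E := by rintro y ⟨y', _, rfl⟩; exact y'.2
  have hDcl : IsClosed D := (hD'clopen.1.isCompact.image continuous_subtype_val).isClosed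
  have hDclosEc : D ∩ closure Eᶜ = ∅ := by
    ext y
    simp only [mem_inter_iff, mem_empty_iff_false, iff_false, not_and]
    rintro ⟨y', hy', rfl⟩ hy2
    have : y' ∈ D' ∩ K' := ⟨hy', hy2⟩
    rw [hDK'] at this; exact this
  have hDop : IsOpen D := by
    obtain ⟨O, hO, hOD⟩ := (isOpen_induced_iff).mp hD'clopen.2
    have : D = O ∩ (closure Eᶜ)ᶜ := by
      apply Subset.antisymm
      · intro y hy
        constructor
        · obtain ⟨y', hy', rfl⟩ := hy
          have : y' ∈ Subtype.val ⁻¹' O := hOD ▸ hy'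
          exact this
        · intro hc
          have : y ∈ D ∩ closure Eᶜ := ⟨hy, hc⟩
          rw [hDclosEc] at this; exact this
      · rintro y ⟨hyO, hyc⟩
        have hyE : y ∈ E := by
          by_contra hyE
          exact hyc (subset_closure hyE)
        exact ⟨⟨y, hyE⟩, hOD ▸ hyO, rfl⟩
    rw [this]
    exact hO.inter (isClosed_closure.isOpen_compl)
  rcases isClopen_iff.mp ⟨hDcl, hDop⟩ with h0 | h1
  · have : x ∈ D := ⟨x', hxD', rfl⟩
    rw [h0] at this; exact this
  · obtain ⟨z, hz⟩ := hne
    exact hz (hDE (h1 ▸ mem_univ z))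

lemma grow {α : Type*} [MetricSpace α] {B M : Set α} (hB : IsCompact B) (hBc : IsPreconnected B)
    (hM : IsClosed M) (hMc : IsPreconnected M) (hMne : M.Nonempty) (hMB : M ⊆ B)
    {δ : ℝ} (hδ : 0 < δ) (hb : ∃ b ∈ B, δ < infDist b M) :
    ∃ C : Set α, IsCompact C ∧ IsPreconnected C ∧ C.Nonempty ∧ M ⊆ C ∧ C ⊆ B ∧
      (∀ x ∈ C, infDist x M ≤ δ) ∧ ¬ C ⊆ M := by
  haveI : CompactSpace B := isCompact_iff_compactSpace.mp hB
  haveI : PreconnectedSpace B := Subtype.preconnectedSpace hBc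
  set E : Set B := (fun y : B => infDist (y : α) M) ⁻¹' Iic δ with hEdef
  have hEcl : IsClosed E :=
    IsClosed.preimage ((continuous_infDist_pt M).comp continuous_subtype_val) isClosed_Iic
  obtain ⟨a, haM⟩ := hMne
  set x' : B := ⟨a, hMB haM⟩ with hx'def
  have hx'E : x' ∈ E := by
    simp only [hEdef, mem_preimage, mem_Iic, hx'def]
    rw [infDist_zero_of_mem haM]; exact hδ.le
  have hEcne : Eᶜ.Nonempty := by
    obtain ⟨b, hbB, hbd⟩ := hb
    exact ⟨⟨b, hbB⟩, by simp only [hEdef, mem_compl_iff, mem_preimage, mem_Iic]; exact not_le.mpr hbd⟩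
  obtain ⟨y, hyC', hycl⟩ := bb hEcl hx'E hEcne
  set C' : Set B := connectedComponentIn E x' with hC'def
  set C : Set α := Subtype.val '' C' with hCdef
  have hC'cp : IsCompact C' := by
    rw [hC'def, connectedComponentIn_eq_image hx'E]
    haveI : CompactSpace E := isCompact_iff_compactSpace.mp hEcl.isCompact
    exact (isClosed_connectedComponent.isCompact).image continuous_subtype_val
  have hMsub : M ⊆ C := by
    have hM' : IsPreconnected ((Subtype.val : B → α) ⁻¹' M) := by
      rw [← Topology.IsInducing.subtypeVal.isPreconnected_image]
      rwa [Subtype.image_preimage_coe, inter_eq_right.mpr hMB]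
    have hsub : (Subtype.val : B → α) ⁻¹' M ⊆ C' := by
      apply hM'.subset_connectedComponentIn
      · exact haM
      · intro z hz
        simp only [hEdef, mem_preimage, mem_Iic]
        rw [infDist_zero_of_mem (show (z : α) ∈ M from hz)]; exact hδ.le
    intro m hm
    exact ⟨⟨m, hMB hm⟩, hsub hm, rfl⟩
  refine ⟨C, hC'cp.image continuous_subtype_val,
    isPreconnected_connectedComponentIn.image _ continuous_subtype_val.continuousOn,
    ⟨a, hMsub haM⟩, hMsub, by rintro z ⟨z', _, rfl⟩; exact z'.2, ?_, ?_⟩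
  · rintro z ⟨z', hz', rfl⟩
    exact connectedComponentIn_subset E x' hz'
  · intro hCM
    have hyM : (y : α) ∈ M := hCM ⟨y, hyC', rfl⟩
    have : δ ≤ infDist (y : α) M := by
      have hcls : closure Eᶜ ⊆ (fun y : B => infDist (y : α) M) ⁻¹' Ici δ := by
        apply closure_minimal
        · intro z hz
          simp only [hEdef, mem_compl_iff, mem_preimage, mem_Iic, not_le] at hz
          exact le_of_lt hz
        · exact IsClosed.preimage ((continuous_infDist_pt M).comp continuous_subtype_val)
            isClosed_Ici
      exact hcls hycl
    rw [infDist_zero_of_mem hyM] at this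
    exact absurd this (not_le.mpr hδ)


/-- Make an element of `Hyp X` from a set. -/
def mkHyp (C : Set X) (h1 : IsCompact C) (h2 : IsConnected C) : Hyp X :=
  ⟨⟨⟨C, h1⟩, h2.nonempty⟩, h2⟩

@[simp] lemma mkHyp_coe (C : Set X) (h1 h2) : ((mkHyp C h1 h2).1 : Set X) = C := rfl

lemma hyp_dist_eq (A B : Hyp X) : dist A B = hausdorffDist (A.1 : Set X) (B.1 : Set X) := rfl

lemma hyp_edist_ne_top (A B : Hyp X) :
    EMetric.hausdorffEdist (A.1 : Set X) (B.1 : Set X) ≠ ⊤ :=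
  hausdorffEdist_ne_top_of_nonempty_of_bounded A.1.nonempty B.1.nonempty
    A.1.isCompact.isBounded B.1.isCompact.isBounded

/-- The sets of subcontinua contained in an open set is open. -/
lemma isOpen_hypSub {U : Set X} (hU : IsOpen U) : IsOpen {A : Hyp X | (A.1 : Set X) ⊆ U} := by
  rw [Metric.isOpen_iff]
  intro A hA
  obtain ⟨δ, hδ, hth⟩ := A.1.isCompact.exists_thickening_subset_open hU hA
  refine ⟨δ, hδ, fun B hB => ?_⟩
  intro x hx
  apply hth
  rw [mem_thickening_iff_infDist_lt A.1.nonempty]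
  calc infDist x (A.1 : Set X) ≤ hausdorffDist (B.1 : Set X) (A.1 : Set X) :=
        infDist_le_hausdorffDist_of_mem hx (hyp_edist_ne_top B A)
    _ < δ := by rw [← hyp_dist_eq]; exact mem_ball.mp hB

/-- The singleton embedding is an isometry. -/
def singHypMap (x : X) : Hyp X := mkHyp {x} isCompact_singleton isConnected_singleton

lemma singHypMap_isometry : Isometry (singHypMap (X := X)) := by
  intro x y
  rw [edist_dist, edist_dist]
  congr 1
  rw [hyp_dist_eq]
  simp only [singHypMap, mkHyp_coe]
  apply le_antisymm
  · apply hausdorffDist_le_of_mem_dist dist_nonneg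
    · intro a ha; rw [mem_singleton_iff] at ha; subst ha; exact ⟨y, rfl, le_refl _⟩
    · intro b hb; exact ⟨x, rfl, by rw [mem_singleton_iff.mp hb, dist_comm]⟩
  · have h1 : infDist x {y} ≤ hausdorffDist {x} {y} :=
      infDist_le_hausdorffDist_of_mem rfl
        (hausdorffEdist_ne_top_of_nonempty_of_bounded (singleton_nonempty x)
          (singleton_nonempty y) Bornology.isBounded_singleton Bornology.isBounded_singleton)
    rwa [infDist_singleton] at h1

lemma hypConn [CompactSpace X] (B : Hyp X) {U V : Set (Hyp X)} (hU : IsOpen U) (hV : IsOpen V)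
    (hcov : ∀ K : Hyp X, (K.1 : Set X) ⊆ (B.1 : Set X) → K ∈ U ∪ V)
    (hdisj : ∀ K : Hyp X, (K.1 : Set X) ⊆ (B.1 : Set X) → ¬(K ∈ U ∧ K ∈ V))
    (hsing : ∀ b ∈ (B.1 : Set X), singHypMap b ∈ U)
    (hBV : B ∈ V) : False := by
  classical
  obtain ⟨a, ha⟩ := B.1.nonempty
  -- the family for Zorn's lemma
  set F : Set (Set X) :=
    {M | ∃ (h1 : IsCompact M) (h2 : IsConnected M),
      a ∈ M ∧ M ⊆ (B.1 : Set X) ∧ mkHyp M h1 h2 ∈ U} with hF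
  -- a criterion for membership in U
  have hmemU : ∀ (M : Set X) (h1 : IsCompact M) (h2 : IsConnected M), M ⊆ (B.1 : Set X) →
      (∀ ε > 0, ∃ N, N ∈ F ∧ hausdorffDist N M < ε) → mkHyp M h1 h2 ∈ U := by
    intro M h1 h2 hMB happrox
    rcases hcov (mkHyp M h1 h2) hMB with h | h
    · exact h
    · exfalso
      obtain ⟨ε, hε, hball⟩ := Metric.isOpen_iff.mp hV (mkHyp M h1 h2) h
      obtain ⟨N, hNF, hNd⟩ := happrox ε hε
      obtain ⟨hN1, hN2, _, hNB, hNU⟩ := hNF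
      have hNV : mkHyp N hN1 hN2 ∈ V := by
        apply hball
        rw [mem_ball, hyp_dist_eq]
        simpa using hNd
      exact hdisj (mkHyp N hN1 hN2) hNB ⟨hNU, hNV⟩
  -- Zorn's lemma
  have hzorn : ∀ c ⊆ F, IsChain (· ⊆ ·) c → c.Nonempty → ∃ ub ∈ F, ∀ s ∈ c, s ⊆ ub := by
    intro c hcF hchain hcne
    set M : Set X := closure (⋃₀ c) with hMdef
    have hMcl : IsClosed M := isClosed_closure
    have hM1 : IsCompact M := hMcl.isCompact
    obtain ⟨s₀, hs₀⟩ := hcne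
    obtain ⟨hs₀1, hs₀2, hs₀a, hs₀B, _⟩ := hcF hs₀
    have haM : a ∈ M := subset_closure (mem_sUnion_of_mem hs₀a hs₀)
    have hM2 : IsConnected M :=
      ⟨⟨a, haM⟩, (IsPreconnected.sUnion_directed hchain.directedOn
        (fun s hs => (hcF hs).2.1.2)).closure⟩
    have hMB : M ⊆ (B.1 : Set X) := by
      rw [hMdef, ← closure_eq_iff_isClosed.mpr B.1.isCompact.isClosed]
      exact closure_mono (sUnion_subset fun s hs => (hcF hs).2.2.2.1)
    refine ⟨M, ⟨hM1, hM2, haM, hMB, ?_⟩, fun s hs => (subset_sUnion_of_mem hs).trans subset_closure⟩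
    apply hmemU M hM1 hM2 hMB
    intro ε hε
    -- find a chain element ε-close to M
    have hcov' : M ⊆ ⋃ y : (⋃₀ c : Set X), ball (y : X) (ε / 3) := by
      intro x hx
      obtain ⟨y, hy, hxy⟩ := Metric.mem_closure_iff.mp hx (ε / 3) (by linarith)
      exact mem_iUnion.mpr ⟨⟨y, hy⟩, mem_ball.mpr hxy⟩
    obtain ⟨u, hu⟩ := hM1.elim_finite_subcover _
      (fun y : (⋃₀ c : Set X) => isOpen_ball) hcov'
    -- collect the centers in a single chain element
    haveI : Nonempty c := ⟨⟨s₀, hs₀⟩⟩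
    have hdir : Directed (· ⊆ ·) (fun s : c => (s : Set X)) := hchain.directedOn.directed_val
    have hsub : ((u.image (fun y : (⋃₀ c : Set X) => (y : X))) : Set X) ⊆
        ⋃ s : c, (s : Set X) := by
      intro z hz
      simp only [Finset.coe_image, mem_image] at hz
      obtain ⟨y, _, rfl⟩ := hz
      obtain ⟨s, hs, hys⟩ := y.2
      exact mem_iUnion.mpr ⟨⟨s, hs⟩, hys⟩
    obtain ⟨s, hsall⟩ := hdir.exists_mem_subset_of_finset_subset_biUnion hsub
    refine ⟨s, hcF s.2, ?_⟩
    have hsM : (s : Set X) ⊆ M := (subset_sUnion_of_mem s.2).trans subset_closure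
    have hd : hausdorffDist (s : Set X) M ≤ ε / 2 := by
      apply hausdorffDist_le_of_mem_dist (by linarith)
      · intro x hx
        exact ⟨x, hsM hx, by rw [dist_self]; positivity⟩
      · intro x hx
        obtain ⟨y, hyu, hy⟩ := mem_iUnion₂.mp (hu hx)
        rw [mem_ball] at hy
        refine ⟨(y : X), ?_, by linarith [hy.le]⟩
        apply hsall
        rw [Finset.coe_image]
        exact mem_image_of_mem _ hyu
    linarith
  obtain ⟨M, hMa, hMmax⟩ := zorn_subset_nonempty F hzorn {a}
    ⟨isCompact_singleton, isConnected_singleton, rfl, by simpa using ha, hsing a ha⟩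
  obtain ⟨hM1, hM2, haM, hMB, hMU⟩ := hMmax.prop
  -- M is a proper subset of B
  have hMne : M ≠ (B.1 : Set X) := by
    intro h
    have hBeq : mkHyp M hM1 hM2 = B := by
      apply Subtype.ext
      apply NonemptyCompacts.ext
      simpa using h
    exact hdisj B subset_rfl ⟨hBeq ▸ hMU, hBV⟩
  obtain ⟨b, hbB, hbM⟩ : ∃ b ∈ (B.1 : Set X), b ∉ M := by
    rcases (ssubset_iff_of_subset hMB).mp (hMB.ssubset_of_ne hMne) with ⟨b, hb1, hb2⟩
    exact ⟨b, hb1, hb2⟩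
  have hbpos : 0 < infDist b M :=
    (hM1.isClosed.notMem_iff_infDist_pos ⟨a, haM⟩).mp hbM
  obtain ⟨εU, hεU, hballU⟩ := Metric.isOpen_iff.mp hU (mkHyp M hM1 hM2) hMU
  set δ : ℝ := min (εU / 2) (infDist b M / 2) with hδdef
  have hδpos : 0 < δ := lt_min (by linarith) (by linarith)
  obtain ⟨C, hC1, hC2, hCne, hMC, hCB, hCd, hCnM⟩ :=
    grow B.1.isCompact B.2.2 hM1.isClosed hM2.2 ⟨a, haM⟩ hMB hδpos
      ⟨b, hbB, lt_of_le_of_lt (min_le_right _ _) (by linarith)⟩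
  have hC2' : IsConnected C := ⟨hCne, hC2⟩
  -- C is close to M
  have hdist : hausdorffDist C M ≤ δ := by
    apply hausdorffDist_le_of_mem_dist hδpos.le
    · intro x hx
      obtain ⟨y, hyM, hy⟩ := hM1.exists_infDist_eq_dist ⟨a, haM⟩ x
      exact ⟨y, hyM, by rw [← hy]; exact hCd x hx⟩
    · intro x hx
      exact ⟨x, hMC hx, by rw [dist_self]; positivity⟩
  have hCU : mkHyp C hC1 hC2' ∈ U := by
    apply hballU
    rw [mem_ball, hyp_dist_eq]
    simp only [mkHyp_coe]
    calc hausdorffDist C M ≤ δ := hdist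
      _ ≤ εU / 2 := min_le_left _ _
      _ < εU := by linarith
  have : C ⊆ M := hMmax.2 ⟨hC1, hC2', hMC haM, hCB, hCU⟩ hMC
  exact hCnM this


section QuotLayer
variable (p : X)

lemma singHypMap_eq_singHyp (x : X) : singHypMap x = singHyp x := rfl

lemma singHyp_mem_CpSet : singHyp p ∈ CpSet p := mem_singleton p

lemma hsMk_eq_CpPoint_iff {A : Hyp X} : hsMk p A = CpPoint p ↔ A ∈ CpSet p := by
  constructor
  · intro h
    rcases (Quotient.exact h : A = singHyp p ∨ (A ∈ CpSet p ∧ singHyp p ∈ CpSet p)) with rfl | h'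
    · exact singHyp_mem_CpSet p
    · exact h'.1
  · intro h
    exact Quotient.sound (Or.inr ⟨h, singHyp_mem_CpSet p⟩)

lemma hsMk_inj {A B : Hyp X} (hA : A ∉ CpSet p) (h : hsMk p A = hsMk p B) : A = B := by
  rcases (Quotient.exact h : A = B ∨ (A ∈ CpSet p ∧ B ∈ CpSet p)) with rfl | h'
  · rfl
  · exact absurd h'.1 hA

lemma continuous_hsMk : Continuous (hsMk p) := continuous_quot_mk

lemma isClosed_CpSet : IsClosed (CpSet p) := by
  have h : CpSet p = (fun A : Hyp X => infDist p (A.1 : Set X)) ⁻¹' {0} := by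
    ext A
    simp only [CpSet, mem_setOf_eq, mem_preimage, mem_singleton_iff]
    rw [← A.1.isCompact.isClosed.mem_iff_infDist_zero A.1.nonempty]
  rw [h]
  apply IsClosed.preimage _ isClosed_singleton
  exact ((lipschitz_infDist_set p).comp (LipschitzWith.subtype_val _)).continuous

lemma image_compl_CpSet : hsMk p '' (CpSet p)ᶜ = {CpPoint p}ᶜ := by
  ext t
  simp only [mem_image, mem_compl_iff, mem_singleton_iff]
  constructor
  · rintro ⟨A, hA, rfl⟩
    exact fun h => hA ((hsMk_eq_CpPoint_iff p).mp h)
  · intro ht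
    obtain ⟨A, rfl⟩ := Quotient.exists_rep t
    exact ⟨A, fun h => ht ((hsMk_eq_CpPoint_iff p).mpr h), rfl⟩

lemma preconn_transfer (h : IsPreconnected ((CpSet p)ᶜ : Set (Hyp X))) :
    IsPreconnected ({CpPoint p}ᶜ : Set (HS p)) := by
  rw [← image_compl_CpSet]
  exact h.image _ (continuous_hsMk p).continuousOn

lemma not_preconn_transfer (h : ¬ IsPreconnected ((CpSet p)ᶜ : Set (Hyp X))) :
    ¬ IsPreconnected ({CpPoint p}ᶜ : Set (HS p)) := by
  rw [IsPreconnected] at h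
  push_neg at h
  obtain ⟨u, v, hu, hv, hcov, hune, hvne, hdisj⟩ := h
  intro hpc
  set u' : Set (HS p) := hsMk p '' (u ∩ (CpSet p)ᶜ) with hu'
  set v' : Set (HS p) := hsMk p '' (v ∩ (CpSet p)ᶜ) with hv'
  have hpre : ∀ w : Set (Hyp X), w ⊆ (CpSet p)ᶜ → hsMk p ⁻¹' (hsMk p '' w) = w := by
    intro w hw
    apply Subset.antisymm
    · rintro A ⟨A', hA', hAA⟩
      exact (hsMk_inj p (hw hA') hAA) ▸ hA'
    · exact subset_preimage_image _ _
  have hu'o : IsOpen u' := by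
    rw [hu']
    rw [show (IsOpen (hsMk p '' (u ∩ (CpSet p)ᶜ)) ↔ _) from
      (isQuotientMap_quot_mk (r := (hsSetoid p).r)).isOpen_preimage.symm]
    change IsOpen (hsMk p ⁻¹' (hsMk p '' (u ∩ (CpSet p)ᶜ)))
    rw [hpre _ inter_subset_right]
    exact hu.inter (isClosed_CpSet p).isOpen_compl
  have hv'o : IsOpen v' := by
    rw [hv']
    rw [show (IsOpen (hsMk p '' (v ∩ (CpSet p)ᶜ)) ↔ _) from
      (isQuotientMap_quot_mk (r := (hsSetoid p).r)).isOpen_preimage.symm]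
    change IsOpen (hsMk p ⁻¹' (hsMk p '' (v ∩ (CpSet p)ᶜ)))
    rw [hpre _ inter_subset_right]
    exact hv.inter (isClosed_CpSet p).isOpen_compl
  have hcov' : ({CpPoint p}ᶜ : Set (HS p)) ⊆ u' ∪ v' := by
    intro t ht
    obtain ⟨A, hA, rfl⟩ := (image_compl_CpSet p).symm ▸ ht
    rcases hcov hA with h | h
    · exact Or.inl ⟨A, ⟨h, hA⟩, rfl⟩
    · exact Or.inr ⟨A, ⟨h, hA⟩, rfl⟩
  have hune' : ({CpPoint p}ᶜ ∩ u' : Set (HS p)).Nonempty := by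
    obtain ⟨A, hAS, hAu⟩ := hune
    refine ⟨hsMk p A, ?_, ⟨A, ⟨hAu, hAS⟩, rfl⟩⟩
    rw [← image_compl_CpSet p]
    exact ⟨A, hAS, rfl⟩
  have hvne' : ({CpPoint p}ᶜ ∩ v' : Set (HS p)).Nonempty := by
    obtain ⟨A, hAS, hAv⟩ := hvne
    refine ⟨hsMk p A, ?_, ⟨A, ⟨hAv, hAS⟩, rfl⟩⟩
    rw [← image_compl_CpSet p]
    exact ⟨A, hAS, rfl⟩
  obtain ⟨t, htT, htu, htv⟩ := hpc u' v' hu'o hv'o hcov' hune' hvne'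
  obtain ⟨A, ⟨hAu, hAS⟩, rfl⟩ := htu
  obtain ⟨A', ⟨hA'v, hA'S⟩, hAA⟩ := htv
  have heq : A' = A := hsMk_inj p hA'S hAA
  subst heq
  have hmem : A' ∈ (CpSet p)ᶜ ∩ (u ∩ v) := ⟨hAS, hAu, hA'v⟩
  rw [hdisj] at hmem
  exact hmem

end QuotLayer

end AuxLemmas

theorem stmt5 [CompactSpace X] [ConnectedSpace X] [Nontrivial X] (p : X) :
    ¬ IsPreconnected ({p}ᶜ : Set X) ↔ ¬ IsPreconnected ({CpPoint p}ᶜ : Set (HS p)) := by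
  constructor
  · -- p is a cut point → C_p is a cut point
    intro h
    apply not_preconn_transfer
    rw [IsPreconnected] at h
    push_neg at h
    obtain ⟨u, v, hu, hv, hcov, hune, hvne, hdisj⟩ := h
    set u₀ : Set X := u ∩ {p}ᶜ with hu₀
    set v₀ : Set X := v ∩ {p}ᶜ with hv₀
    have hu₀o : IsOpen u₀ := hu.inter isClosed_singleton.isOpen_compl
    have hv₀o : IsOpen v₀ := hv.inter isClosed_singleton.isOpen_compl
    have hu₀v₀ : u₀ ∩ v₀ = ∅ := by
      rw [← subset_empty_iff, ← hdisj]
      rintro x ⟨⟨hxu, hxp⟩, ⟨hxv, _⟩⟩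
      exact ⟨hxp, hxu, hxv⟩
    intro hpc
    set uh : Set (Hyp X) := {A | (A.1 : Set X) ⊆ u₀} with huh
    set vh : Set (Hyp X) := {A | (A.1 : Set X) ⊆ v₀} with hvh
    have hcovS : ((CpSet p)ᶜ : Set (Hyp X)) ⊆ uh ∪ vh := by
      intro A hA
      have hsub : (A.1 : Set X) ⊆ u₀ ∪ v₀ := by
        intro x hx
        have hxp : x ∈ ({p}ᶜ : Set X) := fun hxp => hA (mem_singleton_iff.mp hxp ▸ hx)
        rcases hcov hxp with h | h
        · exact Or.inl ⟨h, hxp⟩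
        · exact Or.inr ⟨h, hxp⟩
      by_cases hAv : ((A.1 : Set X) ∩ v₀).Nonempty
      · by_cases hAu : ((A.1 : Set X) ∩ u₀).Nonempty
        · exfalso
          obtain ⟨x, hx1, hx2⟩ := A.2.2 u₀ v₀ hu₀o hv₀o hsub hAu hAv
          rw [hu₀v₀] at hx2
          exact hx2
        · refine Or.inr fun x hx => ?_
          rcases hsub hx with h | h
          · exact absurd ⟨x, hx, h⟩ hAu
          · exact h
      · refine Or.inl fun x hx => ?_
        rcases hsub hx with h | h
        · exact h
        · exact absurd ⟨x, hx, h⟩ hAv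
    have hdisjS : ∀ A : Hyp X, A ∈ uh → A ∈ vh → False := by
      intro A hAu hAv
      obtain ⟨x, hx⟩ := A.1.nonempty
      have hmem : x ∈ u₀ ∩ v₀ := ⟨hAu hx, hAv hx⟩
      rw [hu₀v₀] at hmem
      exact hmem
    obtain ⟨x, hxu, hxS⟩ := hune
    obtain ⟨y, hyv, hyS⟩ := hvne
    have hmemS : ∀ z : X, z ∈ ({p}ᶜ : Set X) → singHypMap z ∈ ((CpSet p)ᶜ : Set (Hyp X)) := by
      intro z hz hmem
      exact hz (mem_singleton_iff.mpr
        (eq_of_mem_singleton (show p ∈ ({z} : Set X) from hmem)).symm)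
    have hxuh : singHypMap x ∈ uh := by
      intro w hw
      simp only [singHypMap, mkHyp, NonemptyCompacts.coe_mk, Compacts.coe_mk,
        mem_singleton_iff] at hw
      subst hw
      exact ⟨hxS, hxu⟩
    have hyvh : singHypMap y ∈ vh := by
      intro w hw
      simp only [singHypMap, mkHyp, NonemptyCompacts.coe_mk, Compacts.coe_mk,
        mem_singleton_iff] at hw
      subst hw
      exact ⟨hyS, hyv⟩
    obtain ⟨A, hAS, hAu, hAv⟩ := hpc uh vh (isOpen_hypSub hu₀o) (isOpen_hypSub hv₀o) hcovS
      ⟨singHypMap x, hmemS x hxu, hxuh⟩ ⟨singHypMap y, hmemS y hyv, hyvh⟩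
    exact hdisjS A hAu hAv
  · -- C_p is a cut point → p is a cut point
    intro h
    contrapose! h
    apply preconn_transfer
    intro u v hu hv hcov hune hvne
    by_contra hcon
    have hdisj : ∀ A : Hyp X, A ∈ ((CpSet p)ᶜ : Set (Hyp X)) → ¬(A ∈ u ∧ A ∈ v) := by
      rintro A hA ⟨h1, h2⟩
      exact hcon ⟨A, hA, h1, h2⟩
    have hσcont : Continuous (singHypMap : X → Hyp X) := singHypMap_isometry.continuous
    have himgS : singHypMap '' ({p}ᶜ : Set X) ⊆ ((CpSet p)ᶜ : Set (Hyp X)) := by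
      rintro _ ⟨z, hz, rfl⟩
      intro hmem
      exact hz (mem_singleton_iff.mpr
        (eq_of_mem_singleton (show p ∈ ({z} : Set X) from hmem)).symm)
    have himgpc : IsPreconnected (singHypMap '' ({p}ᶜ : Set X)) :=
      h.image _ hσcont.continuousOn
    have himgcov : singHypMap '' ({p}ᶜ : Set X) ⊆ u ∪ v := fun A hA => hcov (himgS hA)
    have hcase : (singHypMap '' ({p}ᶜ : Set X)) ∩ u = ∅ ∨
        (singHypMap '' ({p}ᶜ : Set X)) ∩ v = ∅ := by
      by_contra hc
      push_neg at hc
      obtain ⟨h1, h2⟩ := hc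
      obtain ⟨A, hA1, hA2⟩ := himgpc u v hu hv himgcov h1 h2
      exact hdisj A (himgS hA1) hA2
    rcases hcase with hcase | hcase
    · obtain ⟨A, hAS, hAu⟩ := hune
      refine hypConn A hv hu (fun K hK => ?_) (fun K hK h' => ?_) (fun b hb => ?_) hAu
      · have hKS : K ∈ ((CpSet p)ᶜ : Set (Hyp X)) := fun hmem => hAS (hK hmem)
        exact (hcov hKS).symm
      · exact hdisj K (fun hmem => hAS (hK hmem)) ⟨h'.2, h'.1⟩
      · have hbp : b ∈ ({p}ᶜ : Set X) := fun hbp => hAS (mem_singleton_iff.mp hbp ▸ hb)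
        have hmem : singHypMap b ∈ u ∪ v := hcov (himgS ⟨b, hbp, rfl⟩)
        rcases hmem with h' | h'
        · exact absurd hcase (Set.nonempty_iff_ne_empty.mp
            ⟨singHypMap b, ⟨b, hbp, rfl⟩, h'⟩)
        · exact h'
    · obtain ⟨A, hAS, hAv⟩ := hvne
      refine hypConn A hu hv (fun K hK => ?_) (fun K hK h' => ?_) (fun b hb => ?_) hAv
      · exact hcov (fun hmem => hAS (hK hmem))
      · exact hdisj K (fun hmem => hAS (hK hmem)) h'
      · have hbp : b ∈ ({p}ᶜ : Set X) := fun hbp => hAS (mem_singleton_iff.mp hbp ▸ hb)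
        have hmem : singHypMap b ∈ u ∪ v := hcov (himgS ⟨b, hbp, rfl⟩)
        rcases hmem with h' | h'
        · exact h'
        · exact absurd hcase (Set.nonempty_iff_ne_empty.mp
            ⟨singHypMap b, ⟨b, hbp, rfl⟩, h'⟩)
end

section
/- Let X be a continuum and p ∈ X. If X \ {p} is connected, then C(X) \ C(p,X) = C(X \ {p}) is connected. -/
open TopologicalSpace Set Metric

variable {X : Type*} [MetricSpace X]

section Chains
variable {α : Type*} [MetricSpace α]

private lemma crossing {u : Set α} (f : ℕ → α) :
    ∀ n, f 0 ∉ u → f n ∈ u → ∃ i < n, f i ∉ u ∧ f (i + 1) ∈ u := by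
  intro n
  induction n with
  | zero => intro h0 hn; exact absurd hn h0
  | succ n ih =>
    intro h0 hn
    by_cases hfn : f n ∈ u
    · obtain ⟨i, hi, hh⟩ := ih h0 hfn
      exact ⟨i, Nat.lt_succ_of_lt hi, hh⟩
    · exact ⟨n, Nat.lt_succ_self n, hfn, hn⟩

private lemma chain_preconnected {s : Set α} (hs : IsCompact s) {x₀ : α} (hx₀ : x₀ ∈ s)
    (hchain : ∀ x ∈ s, ∀ ε : ℝ, 0 < ε → ∃ n, ∃ f : ℕ → α, f 0 = x ∧ f n = x₀ ∧
      (∀ i ≤ n, f i ∈ s) ∧ ∀ i < n, dist (f i) (f (i + 1)) ≤ ε) :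
    IsPreconnected s := by
  rintro u v hu hv hsuv ⟨x, hxs, hxu⟩ ⟨y, hys, hyv⟩
  by_contra hne
  have hempty : s ∩ (u ∩ v) = ∅ := not_nonempty_iff_eq_empty.mp hne
  have key : ∀ ε : ℝ, 0 < ε → ∃ a ∈ s ∩ u, ∃ b ∈ s ∩ v, dist a b ≤ ε := by
    intro ε hε
    rcases hsuv hx₀ with hx₀u | hx₀v
    · obtain ⟨n, f, hf0, hfn, hfs, hfd⟩ := hchain y hys ε hε
      have hy0 : f 0 ∉ u := by
        rw [hf0]; intro hyu
        exact absurd (⟨y, hys, hyu, hyv⟩ : (s ∩ (u ∩ v)).Nonempty)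
          (by rw [hempty]; exact not_nonempty_empty)
      obtain ⟨i, hi, hfiu, hfi1u⟩ := crossing f n hy0 (hfn ▸ hx₀u)
      have hfis : f i ∈ s := hfs i hi.le
      have hfiv : f i ∈ v := (hsuv hfis).resolve_left hfiu
      exact ⟨f (i + 1), ⟨hfs (i + 1) hi, hfi1u⟩, f i, ⟨hfis, hfiv⟩,
        (dist_comm (f (i+1)) (f i)) ▸ hfd i hi⟩
    · obtain ⟨n, f, hf0, hfn, hfs, hfd⟩ := hchain x hxs ε hε
      have hx0 : f 0 ∉ v := by
        rw [hf0]; intro hxv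
        exact absurd (⟨x, hxs, hxu, hxv⟩ : (s ∩ (u ∩ v)).Nonempty)
          (by rw [hempty]; exact not_nonempty_empty)
      obtain ⟨i, hi, hfiv, hfi1v⟩ := crossing f n hx0 (hfn ▸ hx₀v)
      have hfis : f i ∈ s := hfs i hi.le
      have hfiu : f i ∈ u := (hsuv hfis).resolve_right hfiv
      exact ⟨f i, ⟨hfis, hfiu⟩, f (i + 1), ⟨hfs (i + 1) hi, hfi1v⟩, hfd i hi⟩
  have key' : ∀ k : ℕ, ∃ a ∈ s ∩ u, ∃ b ∈ s ∩ v, dist a b ≤ 1 / (k + 1) := fun k =>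
    key (1 / (k + 1)) (by positivity)
  choose a ha b hb hab using key'
  obtain ⟨z, hzs, φ, hφ, hconv⟩ := hs.tendsto_subseq (fun k => (ha k).1)
  have hbconv : Filter.Tendsto (fun k => b (φ k)) Filter.atTop (nhds z) := by
    rw [tendsto_iff_dist_tendsto_zero]
    apply squeeze_zero (fun k => dist_nonneg)
      (g := fun k => 1 / ((φ k : ℝ) + 1) + dist (a (φ k)) z)
    · intro k
      calc dist (b (φ k)) z ≤ dist (b (φ k)) (a (φ k)) + dist (a (φ k)) z := dist_triangle _ _ _
        _ ≤ 1 / ((φ k : ℝ) + 1) + dist (a (φ k)) z := by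
            have := hab (φ k); rw [dist_comm] at this; linarith
    · have h1 : Filter.Tendsto (fun k => 1 / ((φ k : ℝ) + 1)) Filter.atTop (nhds 0) :=
        (tendsto_one_div_add_atTop_nhds_zero_nat).comp hφ.tendsto_atTop
      have h2 : Filter.Tendsto (fun k => dist (a (φ k)) z) Filter.atTop (nhds 0) :=
        tendsto_iff_dist_tendsto_zero.mp hconv
      simpa using h1.add h2
  rcases hsuv hzs with hzu | hzv
  · have : ∀ᶠ k in Filter.atTop, b (φ k) ∈ u := hbconv (hu.mem_nhds hzu)
    obtain ⟨k, hk⟩ := this.exists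
    exact absurd (⟨b (φ k), (hb (φ k)).1, hk, (hb (φ k)).2⟩ : (s ∩ (u ∩ v)).Nonempty)
      (by rw [hempty]; exact not_nonempty_empty)
  · have : ∀ᶠ k in Filter.atTop, a (φ k) ∈ v := hconv (hv.mem_nhds hzv)
    obtain ⟨k, hk⟩ := this.exists
    exact absurd (⟨a (φ k), (ha (φ k)).1, (ha (φ k)).2, hk⟩ : (s ∩ (u ∩ v)).Nonempty)
      (by rw [hempty]; exact not_nonempty_empty)

end Chains

section Step
variable {Y : Type*} [MetricSpace Y] [CompactSpace Y] [ConnectedSpace Y]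

private lemma step {B : Set Y} (hBc : IsCompact B) (hBp : IsPreconnected B) (hBne : B.Nonempty)
    {ε : ℝ} (hε : 0 < ε) :
    ∃ C : Set Y, B ⊆ C ∧ IsCompact C ∧ IsPreconnected C ∧
      hausdorffDist B C ≤ ε ∧ (C = univ ∨ ∃ c ∈ C, ε ≤ infDist c B) := by
  obtain ⟨b0, hb0⟩ := hBne
  set K : Set Y := {y | infDist y B ≤ ε} with hK
  have hKclosed : IsClosed K := isClosed_le (continuous_infDist_pt B) continuous_const
  have hBK : B ⊆ K := fun y hy => by
    simp only [hK, mem_setOf_eq, infDist_zero_of_mem hy]; exact hε.le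
  set C : Set Y := connectedComponentIn K b0 with hC
  have hCp : IsPreconnected C := isPreconnected_connectedComponentIn
  have hBC : B ⊆ C := hBp.subset_connectedComponentIn hb0 hBK
  have hb0C : b0 ∈ C := hBC hb0
  have hCK : C ⊆ K := connectedComponentIn_subset _ _
  have hCclosed : IsClosed C := by
    rw [← closure_subset_iff_isClosed]
    exact hCp.closure.subset_connectedComponentIn (subset_closure hb0C)
      ((closure_minimal hCK hKclosed))
  have hCc : IsCompact C := hCclosed.isCompact
  have hBne' : B.Nonempty := ⟨b0, hb0⟩
  have hdist : hausdorffDist B C ≤ ε := by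
    apply hausdorffDist_le_of_mem_dist hε.le
    · intro x hx; exact ⟨x, hBC hx, by simpa using hε.le⟩
    · intro x hx
      obtain ⟨y, hy, hxy⟩ := hBc.exists_infDist_eq_dist hBne' x
      exact ⟨y, hy, by rw [← hxy]; exact hCK hx⟩
  refine ⟨C, hBC, hCc, hCp, hdist, ?_⟩
  by_cases hF : ∃ c ∈ C, ε ≤ infDist c B
  · exact Or.inr hF
  push_neg at hF
  left
  -- boundary bumping: if the component avoids the sphere, it is all of Y
  haveI : CompactSpace ↥K := isCompact_iff_compactSpace.mp hKclosed.isCompact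
  have hb0K : b0 ∈ K := hBK hb0
  set z0 : ↥K := ⟨b0, hb0K⟩ with hz0
  have hC_eq : C = Subtype.val '' connectedComponent z0 := connectedComponentIn_eq_image hb0K
  set F' : Set ↥K := {z | infDist (z : Y) B = ε} with hF'
  have hF'closed : IsClosed F' :=
    isClosed_eq ((continuous_infDist_pt B).comp continuous_subtype_val) continuous_const
  have hcompF' : connectedComponent z0 ∩ F' = ∅ := by
    rw [eq_empty_iff_forall_notMem]
    rintro z ⟨hz1, hz2⟩
    have : (z : Y) ∈ C := hC_eq ▸ mem_image_of_mem _ hz1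
    exact (hF _ this).ne hz2
  have hinter := connectedComponent_eq_iInter_isClopen z0
  obtain ⟨t, ht⟩ : ∃ t : Finset { Z : Set ↥K // IsClopen Z ∧ z0 ∈ Z },
      (F' ∩ ⋂ Z ∈ t, (Z : { Z : Set ↥K // IsClopen Z ∧ z0 ∈ Z }).1) = ∅ := by
    apply hF'closed.isCompact.elim_finite_subfamily_closed
      (fun Z : { Z : Set ↥K // IsClopen Z ∧ z0 ∈ Z } => Z.1) (fun Z => Z.2.1.isClosed)
    rw [← hinter, inter_comm]
    exact hcompF'
  set U₀ : Set ↥K := ⋂ Z ∈ t, (Z : { Z : Set ↥K // IsClopen Z ∧ z0 ∈ Z }).1 with hU₀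
  have hU₀clopen : IsClopen U₀ := isClopen_biInter_finset fun Z _ => Z.2.1
  have hz0U₀ : z0 ∈ U₀ := mem_iInter₂.mpr fun Z _ => Z.2.2
  set U : Set Y := Subtype.val '' U₀ with hU
  have hUK : U ⊆ K := by rintro y ⟨z, _, rfl⟩; exact z.2
  have hUlt : ∀ y ∈ U, infDist y B < ε := by
    rintro y ⟨z, hz, rfl⟩
    have hz2 : infDist (z : Y) B ≤ ε := z.2
    rcases lt_or_eq_of_le hz2 with hlt | heq
    · exact hlt
    · exfalso
      have hzz : z ∈ F' ∩ U₀ := ⟨heq, hz⟩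
      rw [ht] at hzz
      exact notMem_empty z hzz
  have hUclosed : IsClosed U :=
    ((hU₀clopen.isClosed.isCompact).image continuous_subtype_val).isClosed
  have hUopen : IsOpen U := by
    obtain ⟨V, hV, hVU⟩ := isOpen_induced_iff.mp hU₀clopen.isOpen
    set O : Set Y := {y | infDist y B < ε} with hO
    have hOopen : IsOpen O := isOpen_lt (continuous_infDist_pt B) continuous_const
    have hUVK : U = V ∩ K := by
      rw [hU, ← hVU, Subtype.image_preimage_coe]
      exact inter_comm _ _
    have : U = V ∩ O := by
      apply Subset.antisymm
      · intro y hy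
        exact ⟨(hUVK ▸ hy).1, hUlt y hy⟩
      · rintro y ⟨hyV, hyO⟩
        rw [hUVK]; exact ⟨hyV, show infDist y B ≤ ε from le_of_lt hyO⟩
    rw [this]; exact hV.inter hOopen
  have hUuniv : U = univ := IsClopen.eq_univ ⟨hUclosed, hUopen⟩ ⟨b0, mem_image_of_mem _ hz0U₀⟩
  have hKuniv : K = univ := eq_univ_of_univ_subset (hUuniv ▸ hUK)
  rw [hC, hKuniv, connectedComponentIn_univ, PreconnectedSpace.connectedComponent_eq_univ]

end Step

section Iterate
variable {Y : Type*} [MetricSpace Y] [CompactSpace Y] [ConnectedSpace Y]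

private lemma exists_chain_to_univ {B : Set Y} (hBc : IsCompact B) (hBp : IsPreconnected B)
    (hBne : B.Nonempty) {ε : ℝ} (hε : 0 < ε) :
    ∃ n, ∃ f : ℕ → Set Y, f 0 = B ∧ f n = univ ∧
      (∀ i, IsCompact (f i) ∧ IsPreconnected (f i) ∧ (f i).Nonempty) ∧
      ∀ i < n, hausdorffDist (f i) (f (i + 1)) ≤ ε := by
  have stepEx : ∀ C : {C : Set Y // IsCompact C ∧ IsPreconnected C ∧ C.Nonempty},
      ∃ D : {C : Set Y // IsCompact C ∧ IsPreconnected C ∧ C.Nonempty},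
        C.1 ⊆ D.1 ∧ hausdorffDist C.1 D.1 ≤ ε ∧
          (D.1 = univ ∨ ∃ c ∈ D.1, ε ≤ infDist c C.1) := by
    intro C
    obtain ⟨D, h1, h2, h3, h4, h5⟩ := step C.2.1 C.2.2.1 C.2.2.2 hε
    exact ⟨⟨D, h2, h3, C.2.2.2.mono h1⟩, h1, h4, h5⟩
  choose stepT hsub hdist hdich using stepEx
  set g : ℕ → {C : Set Y // IsCompact C ∧ IsPreconnected C ∧ C.Nonempty} :=
    fun n => stepT^[n] ⟨B, hBc, hBp, hBne⟩ with hg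
  have hgsucc : ∀ k, g (k + 1) = stepT (g k) := fun k => Function.iterate_succ_apply' _ _ _
  have hmono : ∀ k, (g k).1 ⊆ (g (k + 1)).1 := fun k => by rw [hgsucc]; exact hsub _
  have hmono' : ∀ m n, m ≤ n → (g m).1 ⊆ (g n).1 := by
    intro m n hmn
    induction hmn with
    | refl => exact subset_rfl
    | step h ih => exact ih.trans (hmono _)
  have hterm : ∃ n, (g n).1 = univ := by
    by_contra hno
    push_neg at hno
    have hc : ∀ k, ∃ c ∈ (g (k + 1)).1, ε ≤ infDist c (g k).1 := by
      intro k
      have := hdich (g k)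
      rw [← hgsucc] at this
      exact this.resolve_left (hno (k + 1))
    choose c hc1 hc2 using hc
    have hsep : ∀ m n, m < n → ε ≤ dist (c n) (c m) := by
      intro m n hmn
      have hcm : c m ∈ (g n).1 := hmono' (m + 1) n hmn (hc1 m)
      exact le_trans (hc2 n) (infDist_le_dist_of_mem hcm)
    obtain ⟨t, htfin, htcov⟩ := (Metric.totallyBounded_iff.mp
      ((isCompact_univ : IsCompact (univ : Set Y)).totallyBounded)) (ε / 2) (by positivity)
    have hmem : ∀ k : ℕ, ∃ y : t, c k ∈ ball (y : Y) (ε / 2) := by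
      intro k
      have h2 := htcov (mem_univ (c k))
      simp only [mem_iUnion, exists_prop] at h2
      obtain ⟨yy, hyy, hmemy⟩ := h2
      exact ⟨⟨yy, hyy⟩, hmemy⟩
    choose y hy using hmem
    haveI : Finite t := htfin.to_subtype
    obtain ⟨m, n, hmn, hymn⟩ := Finite.exists_ne_map_eq_of_infinite y
    have hd : dist (c m) (c n) < ε := by
      calc dist (c m) (c n) ≤ dist (c m) (y m : Y) + dist (y n : Y) (c n) := by
            rw [hymn]; exact dist_triangle _ _ _
        _ < ε / 2 + ε / 2 := add_lt_add (mem_ball.mp (hy m)) (by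
            rw [dist_comm]; exact mem_ball.mp (hy n))
        _ = ε := by ring
    rcases hmn.lt_or_gt with h | h
    · exact absurd hd (not_lt.mpr (by rw [dist_comm]; exact hsep m n h))
    · exact absurd hd (not_lt.mpr (hsep n m h))
  obtain ⟨n, hn⟩ := hterm
  refine ⟨n, fun k => (g k).1, rfl, hn, fun i => (g i).2, fun i _ => ?_⟩
  show hausdorffDist (g i).1 (g (i + 1)).1 ≤ ε
  rw [hgsucc]
  exact hdist _

end Iterate

section Hyper
variable {X : Type*} [MetricSpace X]

private lemma edist_fin (s t : NonemptyCompacts X) :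
    EMetric.hausdorffEdist (s : Set X) (t : Set X) ≠ ⊤ :=
  hausdorffEdist_ne_top_of_nonempty_of_bounded s.nonempty t.nonempty
    s.isCompact.isBounded t.isCompact.isBounded

private lemma isClosed_subsets {A : Set X} (hA : IsClosed A) (hAne : A.Nonempty) :
    IsClosed {N : NonemptyCompacts X | (N : Set X) ⊆ A} := by
  rw [← isOpen_compl_iff]
  rw [Metric.isOpen_iff]
  intro N hN
  simp only [mem_compl_iff, mem_setOf_eq] at hN
  obtain ⟨b, hbN, hbA⟩ := not_subset.mp hN
  have hr : 0 < infDist b A := (hA.notMem_iff_infDist_pos hAne).mp hbA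
  refine ⟨infDist b A, hr, fun N' hN' => ?_⟩
  rw [mem_ball, NonemptyCompacts.dist_eq] at hN'
  simp only [mem_compl_iff, mem_setOf_eq]
  intro hsub
  obtain ⟨b', hb', hbb'⟩ := exists_dist_lt_of_hausdorffDist_lt' hbN hN' (edist_fin N' N)
  have h1 : infDist b A ≤ infDist b' A + dist b b' := infDist_le_infDist_add_dist
  rw [infDist_zero_of_mem (hsub hb'), zero_add, dist_comm] at h1
  exact absurd (lt_of_le_of_lt h1 hbb') (lt_irrefl _)

private lemma isOpen_not_preconnected :
    IsOpen {N : NonemptyCompacts X | ¬ IsPreconnected (N : Set X)} := by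
  rw [Metric.isOpen_iff]
  intro N hN
  simp only [mem_setOf_eq, IsPreconnected] at hN
  push_neg at hN
  obtain ⟨u, v, hu, hv, hcov, ⟨x1, hx1⟩, ⟨x2, hx2⟩, hdisj⟩ := hN
  have hdisj' : (N : Set X) ∩ (u ∩ v) = ∅ := hdisj
  set K1 : Set X := (N : Set X) \ v with hK1
  set K2 : Set X := (N : Set X) \ u with hK2
  have hK1c : IsCompact K1 := N.isCompact.diff hv
  have hK2c : IsCompact K2 := N.isCompact.diff hu
  have hK1ne : x1 ∈ K1 := ⟨hx1.1, fun hv' => (eq_empty_iff_forall_notMem.mp hdisj' x1)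
    ⟨hx1.1, hx1.2, hv'⟩⟩
  have hK2ne : x2 ∈ K2 := ⟨hx2.1, fun hu' => (eq_empty_iff_forall_notMem.mp hdisj' x2)
    ⟨hx2.1, hu', hx2.2⟩⟩
  have hdisjK : Disjoint K1 K2 := by
    rw [disjoint_left]
    rintro a ⟨haN, hav⟩ ⟨_, hau⟩
    rcases hcov haN with h | h
    exacts [hau h, hav h]
  obtain ⟨δ, hδ, hthick⟩ := hdisjK.exists_thickenings hK1c hK2c.isClosed
  refine ⟨δ, hδ, fun N' hN' => ?_⟩
  rw [mem_ball, NonemptyCompacts.dist_eq] at hN'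
  simp only [mem_setOf_eq]
  intro hpc
  have hcov' : (N' : Set X) ⊆ thickening δ K1 ∪ thickening δ K2 := by
    intro x hx
    obtain ⟨b, hb, hxb⟩ := exists_dist_lt_of_hausdorffDist_lt hx hN' (edist_fin N' N)
    have hbK : b ∈ K1 ∪ K2 := by
      by_cases hbv : b ∈ v
      · exact Or.inr ⟨hb, fun hbu => (eq_empty_iff_forall_notMem.mp hdisj' b) ⟨hb, hbu, hbv⟩⟩
      · exact Or.inl ⟨hb, hbv⟩
    rcases hbK with h | h
    · exact Or.inl (mem_thickening_iff.mpr ⟨b, h, hxb⟩)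
    · exact Or.inr (mem_thickening_iff.mpr ⟨b, h, hxb⟩)
  have hne1 : ((N' : Set X) ∩ thickening δ K1).Nonempty := by
    obtain ⟨x, hx, hxd⟩ := exists_dist_lt_of_hausdorffDist_lt' hK1ne.1 hN' (edist_fin N' N)
    exact ⟨x, hx, mem_thickening_iff.mpr ⟨x1, hK1ne, hxd⟩⟩
  have hne2 : ((N' : Set X) ∩ thickening δ K2).Nonempty := by
    obtain ⟨x, hx, hxd⟩ := exists_dist_lt_of_hausdorffDist_lt' hK2ne.1 hN' (edist_fin N' N)
    exact ⟨x, hx, mem_thickening_iff.mpr ⟨x2, hK2ne, hxd⟩⟩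
  obtain ⟨w, hw⟩ := hpc (thickening δ K1) (thickening δ K2)
    isOpen_thickening isOpen_thickening hcov' hne1 hne2
  exact (disjoint_left.mp hthick) hw.2.1 hw.2.2

end Hyper

section Main
variable {X : Type*} [MetricSpace X]

private lemma isPreconnected_subcontinua [CompactSpace X] {A : Set X}
    (hAc : IsCompact A) (hAconn : IsConnected A) :
    IsPreconnected {B : Hyp X | (B.1 : Set X) ⊆ A} := by
  set D : Set (Hyp X) := {B : Hyp X | (B.1 : Set X) ⊆ A} with hD
  have hDcompact : IsCompact D := by
    rw [Topology.IsEmbedding.subtypeVal.isCompact_iff]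
    have himg : Subtype.val '' D
        = {N : NonemptyCompacts X | (N : Set X) ⊆ A} ∩ {N | IsConnected (N : Set X)} := by
      ext N
      constructor
      · rintro ⟨B, hB, rfl⟩; exact ⟨hB, B.2⟩
      · rintro ⟨h1, h2⟩; exact ⟨⟨N, h2⟩, h1, rfl⟩
    rw [himg]
    have hconn_eq : {N : NonemptyCompacts X | IsConnected (N : Set X)}
        = {N : NonemptyCompacts X | ¬ IsPreconnected (N : Set X)}ᶜ := by
      ext N
      simp only [mem_setOf_eq, mem_compl_iff, not_not, IsConnected]
      exact ⟨fun h => h.2, fun h => ⟨N.nonempty, h⟩⟩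
    have hclosed : IsClosed ({N : NonemptyCompacts X | (N : Set X) ⊆ A}
        ∩ {N | IsConnected (N : Set X)}) := by
      apply IsClosed.inter (isClosed_subsets hAc.isClosed hAconn.nonempty)
      rw [hconn_eq]
      exact isOpen_not_preconnected.isClosed_compl
    exact hclosed.isCompact
  haveI : CompactSpace ↥A := isCompact_iff_compactSpace.mp hAc
  haveI : ConnectedSpace ↥A := Subtype.connectedSpace hAconn
  set A₀ : Hyp X := ⟨⟨⟨A, hAc⟩, hAconn.nonempty⟩, hAconn⟩ with hA₀
  have hA₀D : A₀ ∈ D := by show (A₀.1 : Set X) ⊆ A; exact subset_rfl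
  apply chain_preconnected hDcompact hA₀D
  intro P hP ε hε
  set BP : Set ↥A := Subtype.val ⁻¹' (P.1 : Set X) with hBP
  have hBPim : Subtype.val '' BP = (P.1 : Set X) := by
    apply Subset.antisymm
    · rintro x ⟨z, hz, rfl⟩; exact hz
    · intro x hx; exact ⟨⟨x, hP hx⟩, hx, rfl⟩
  have hBPc : IsCompact BP :=
    (hAc.isClosed.isClosedEmbedding_subtypeVal).isCompact_preimage P.1.isCompact
  have hBPp : IsPreconnected BP :=
    Topology.IsInducing.subtypeVal.isPreconnected_image.mp (by rw [hBPim]; exact P.2.2)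
  have hBPne : BP.Nonempty := by
    obtain ⟨x, hx⟩ := P.1.nonempty
    exact ⟨⟨x, hP hx⟩, hx⟩
  obtain ⟨n, f, hf0, hfn, hfprops, hfd⟩ := exists_chain_to_univ hBPc hBPp hBPne hε
  set F : ℕ → Hyp X := fun i =>
    ⟨⟨⟨Subtype.val '' f i, ((hfprops i).1).image continuous_subtype_val⟩,
      ((hfprops i).2.2).image _⟩,
      ⟨((hfprops i).2.2).image _,
        Topology.IsInducing.subtypeVal.isPreconnected_image.mpr (hfprops i).2.1⟩⟩ with hF
  refine ⟨n, F, ?_, ?_, ?_, ?_⟩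
  · apply Subtype.ext
    apply NonemptyCompacts.ext
    show Subtype.val '' f 0 = (P.1 : Set X)
    rw [hf0, hBPim]
  · apply Subtype.ext
    apply NonemptyCompacts.ext
    show Subtype.val '' f n = A
    rw [hfn, image_univ, Subtype.range_coe]
  · intro i _
    show Subtype.val '' f i ⊆ A
    rintro x ⟨z, _, rfl⟩
    exact z.2
  · intro i _
    show dist (F i) (F (i + 1)) ≤ ε
    rw [Subtype.dist_eq, NonemptyCompacts.dist_eq]
    show hausdorffDist (Subtype.val '' f i) (Subtype.val '' f (i + 1)) ≤ ε
    rw [hausdorffDist_image isometry_subtype_coe]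
    exact hfd i (by assumption)

end Main

theorem stmt6 [CompactSpace X] [ConnectedSpace X] [Nontrivial X] (p : X) (h : IsConnected ({p}ᶜ : Set X)) :
    IsConnected ((CpSet p)ᶜ : Set (Hyp X)) := by
  obtain ⟨x₀, hx₀⟩ := exists_ne p
  have hsing_dist : ∀ x y : X, dist (singHyp x) (singHyp y) ≤ 1 * dist x y := by
    intro x y
    rw [one_mul, Subtype.dist_eq, NonemptyCompacts.dist_eq]
    show hausdorffDist ({x} : Set X) {y} ≤ dist x y
    apply hausdorffDist_le_of_mem_dist dist_nonneg
    · intro a ha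
      rw [mem_singleton_iff] at ha
      exact ⟨y, rfl, by rw [ha]⟩
    · intro a ha
      rw [mem_singleton_iff] at ha
      exact ⟨x, rfl, by rw [ha, dist_comm]⟩
  have hsing_cont : Continuous (fun x : X => singHyp x) :=
    (LipschitzWith.of_dist_le_mul (K := 1) (by exact_mod_cast hsing_dist)).continuous
  set S : Set (Hyp X) := (fun x : X => singHyp x) '' {p}ᶜ with hS
  have hSpre : IsPreconnected S := h.isPreconnected.image _ hsing_cont.continuousOn
  have hSsub : S ⊆ (CpSet p)ᶜ := by
    rintro _ ⟨x, hx, rfl⟩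
    intro hmem
    have : p ∈ ({x} : Set X) := hmem
    rw [mem_singleton_iff] at this
    exact hx this.symm
  have hx₀c : (x₀ : X) ∈ ({p}ᶜ : Set X) := hx₀
  have hx₀S : singHyp x₀ ∈ S := ⟨x₀, hx₀c, rfl⟩
  have hcompl_eq : ((CpSet p)ᶜ : Set (Hyp X)) =
      ⋃ (A : ↥((CpSet p)ᶜ : Set (Hyp X))),
        (S ∪ {B : Hyp X | (B.1 : Set X) ⊆ ((A : Hyp X).1 : Set X)}) := by
    ext B
    constructor
    · intro hB
      exact mem_iUnion.mpr ⟨⟨B, hB⟩, Or.inr (show (B.1 : Set X) ⊆ (B.1 : Set X) from subset_rfl)⟩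
    · intro hB
      obtain ⟨A, hA⟩ := mem_iUnion.mp hB
      rcases hA with hBS | hBsub
      · exact hSsub hBS
      · intro hmem
        exact A.2 (hBsub hmem)
  rw [hcompl_eq]
  refine ⟨⟨singHyp x₀, mem_iUnion.mpr ⟨⟨singHyp x₀, hSsub hx₀S⟩, Or.inl hx₀S⟩⟩, ?_⟩
  apply isPreconnected_iUnion
  · exact ⟨singHyp x₀, mem_iInter.mpr fun A => Or.inl hx₀S⟩
  · intro A
    have hAc : IsCompact ((A : Hyp X).1 : Set X) := (A : Hyp X).1.isCompact
    have hAconn : IsConnected ((A : Hyp X).1 : Set X) := (A : Hyp X).2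
    obtain ⟨a, ha⟩ := (A : Hyp X).1.nonempty
    have hanep : a ≠ p := by
      intro hap
      exact A.2 (show p ∈ ((A : Hyp X).1 : Set X) from hap ▸ ha)
    apply IsPreconnected.union (singHyp a)
    · exact ⟨a, fun hc => hanep hc, rfl⟩
    · show ({a} : Set X) ⊆ ((A : Hyp X).1 : Set X)
      exact singleton_subset_iff.mpr ha
    · exact hSpre
    · exact isPreconnected_subcontinua hAc hAconn
end

section
/- Let X be a continuum and p ∈ X. If C(X) is homeomorphic to HS(p,X), then X \ {p} is connected. -/
open TopologicalSpace Set

variable {X : Type*} [MetricSpace X]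

namespace Stmt7Aux
set_option linter.unusedSectionVars false

open Metric EMetric ENNReal

variable {X : Type*} [MetricSpace X] [CompactSpace X]

/-- A subcontinuum, as a predicate on sets. -/
def Sub (A : Set X) : Prop := A.Nonempty ∧ IsCompact A ∧ IsPreconnected A

def toHyp (A : Set X) (h : Sub A) : Hyp X := ⟨⟨⟨A, h.2.1⟩, h.1⟩, h.1, h.2.2⟩

@[simp] lemma toHyp_coe (A : Set X) (h : Sub A) : ((toHyp A h).1 : Set X) = A := rfl

lemma hyp_ext {A B : Hyp X} (h : (A.1 : Set X) = (B.1 : Set X)) : A = B :=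
  Subtype.ext (NonemptyCompacts.ext h)

lemma hyp_sub (A : Hyp X) : Sub (A.1 : Set X) := ⟨A.1.nonempty, A.1.isCompact, A.2.2⟩

lemma edist_hyp (A B : Hyp X) : edist A B = hausdorffEdist (A.1 : Set X) (B.1 : Set X) := rfl

lemma sub_closed {A : Set X} (h : Sub A) : IsClosed A := h.2.1.isClosed

/-- small positive finite epsilon -/
lemma exists_small {ε : ℝ≥0∞} (hε : 0 < ε) : ∃ δ : ℝ≥0∞, 0 < δ ∧ δ ≠ ⊤ ∧ 3 * δ < ε := by
  obtain ⟨r, hr0, hrε⟩ := ENNReal.lt_iff_exists_nnreal_btwn.1 hε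
  refine ⟨(r : ℝ≥0∞) / 3, ?_, ?_, ?_⟩
  · refine ENNReal.div_pos (by exact_mod_cast hr0.ne') (by norm_num)
  · exact (ENNReal.div_lt_top ENNReal.coe_ne_top (by norm_num)).ne
  · rwa [ENNReal.mul_div_cancel' (by norm_num) (by norm_num)]

lemma infEdist_pos_of_not_mem {A : Set X} (hA : IsClosed A) {x : X} (hx : x ∉ A) :
    0 < infEdist x A := by
  rw [pos_iff_ne_zero]
  intro h0
  exact hx ((mem_iff_infEdist_zero_of_closed hA).2 h0)

lemma subset_of_approx_sub {s t : Set X} (ht : IsClosed t)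
    (h : ∀ ε : ℝ≥0∞, 0 < ε → ∃ D : Set X, D ⊆ t ∧ hausdorffEdist s D < ε) : s ⊆ t := by
  intro x hx
  rw [mem_iff_infEdist_zero_of_closed ht]
  by_contra h0
  obtain ⟨D, hD, hlt⟩ := h _ (pos_iff_ne_zero.2 h0)
  exact absurd (lt_of_le_of_lt (le_trans (infEdist_anti hD) (infEdist_le_hausdorffEdist_of_mem hx)) hlt)
    (lt_irrefl _)

lemma supset_of_approx {s t : Set X} (hs : IsClosed s)
    (h : ∀ ε : ℝ≥0∞, 0 < ε → ∃ D : Set X, t ⊆ D ∧ hausdorffEdist s D < ε) : t ⊆ s := by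
  intro x hx
  rw [mem_iff_infEdist_zero_of_closed hs]
  by_contra h0
  obtain ⟨D, hD, hlt⟩ := h _ (pos_iff_ne_zero.2 h0)
  rw [show hausdorffEdist s D = hausdorffEdist D s from hausdorffEDist_comm] at hlt
  exact absurd (lt_of_le_of_lt (infEdist_le_hausdorffEdist_of_mem (hD hx)) hlt) (lt_irrefl _)

/-- upper bound for finitely many elements of a chain -/
lemma chain_finset_ub {α : Type*} {T : Set (Set α)} (hc : IsChain (· ⊆ ·) T)
    {D₀ : Set α} (hD₀ : D₀ ∈ T) {ι : Type*} (t : Finset ι) (f : ι → Set α)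
    (hf : ∀ i ∈ t, f i ∈ T) : ∃ D ∈ T, D₀ ⊆ D ∧ ∀ i ∈ t, f i ⊆ D := by
  classical
  induction t using Finset.induction_on with
  | empty => exact ⟨D₀, hD₀, subset_rfl, by simp⟩
  | insert a s hnotmem ih =>
    obtain ⟨D, hDT, hD₀D, hD⟩ := ih (fun i hi => hf i (Finset.mem_insert_of_mem hi))
    have hfa : f a ∈ T := hf a (Finset.mem_insert_self a s)
    rcases hc.total hDT hfa with h | h
    · exact ⟨f a, hfa, hD₀D.trans h, fun i hi => by
        rcases Finset.mem_insert.1 hi with rfl | hi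
        · exact subset_rfl
        · exact (hD i hi).trans h⟩
    · exact ⟨D, hDT, hD₀D, fun i hi => by
        rcases Finset.mem_insert.1 hi with rfl | hi
        · exact h
        · exact hD i hi⟩

lemma sup_approx {T : Set (Set X)} (hne : T.Nonempty) (hc : IsChain (· ⊆ ·) T)
    {ε : ℝ≥0∞} (hε : 0 < ε) :
    ∃ D ∈ T, hausdorffEdist D (closure (⋃₀ T)) < ε := by
  classical
  obtain ⟨δ, hδ0, hδtop, hδε⟩ := exists_small hε
  set P := closure (⋃₀ T) with hP
  have hPc : IsCompact P := isClosed_closure.isCompact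
  -- finite δ-net of P from the union
  have hcover : P ⊆ ⋃ x : P, EMetric.ball (x : X) δ := by
    intro x hx
    exact mem_iUnion.2 ⟨⟨x, hx⟩, EMetric.mem_ball_self hδ0⟩
  obtain ⟨t, ht⟩ := hPc.elim_finite_subcover (fun x : P => EMetric.ball (x : X) δ)
    (fun _ => EMetric.isOpen_ball) hcover
  -- for each center pick a nearby point of the union
  have hchoice : ∀ i : P, ∃ D ∈ T, ∃ y ∈ D, edist (i : X) y < δ := by
    intro i
    have : (i : X) ∈ closure (⋃₀ T) := i.2
    obtain ⟨y, hy, hyd⟩ := EMetric.mem_closure_iff.1 this δ hδ0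
    obtain ⟨D, hD, hyD⟩ := hy
    exact ⟨D, hD, y, hyD, hyd⟩
  choose g hgT y hy hyd using hchoice
  obtain ⟨D, hDT, _, hDub⟩ := chain_finset_ub hc hne.choose_spec t g (fun i _ => hgT i)
  refine ⟨D, hDT, ?_⟩
  have hDP : D ⊆ P := subset_closure.trans' (subset_sUnion_of_mem hDT) |>.trans subset_rfl
  have hbound : hausdorffEdist D P ≤ 2 * δ := by
    apply hausdorffEdist_le_of_infEdist
    · intro x hx
      have : infEdist x P = 0 := infEdist_zero_of_mem (hDP hx)
      simp [show infEDist x P = 0 from this]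
    · intro x hx
      obtain ⟨i, hit, hib⟩ := mem_iUnion₂.1 (ht hx)
      have h1 : edist x (y i) ≤ edist x (i : X) + edist (i : X) (y i) := edist_triangle _ _ _
      have h2 : edist x (y i) < δ + δ := lt_of_le_of_lt h1
        (ENNReal.add_lt_add (EMetric.mem_ball.1 hib) (hyd i))
      calc infEdist x D ≤ edist x (y i) := infEdist_le_edist_of_mem (hDub i hit (hy i))
        _ ≤ δ + δ := h2.le
        _ = 2 * δ := (two_mul δ).symm
  calc hausdorffEdist D P ≤ 2 * δ := hbound
    _ < 3 * δ := by
        apply ENNReal.mul_lt_mul_left hδ0.ne' hδtop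
        norm_num
    _ < ε := hδε

lemma inf_approx {T : Set (Set X)} (hne : T.Nonempty) (hc : IsChain (· ⊆ ·) T)
    (hcl : ∀ A ∈ T, IsClosed A) {ε : ℝ≥0∞} (hε : 0 < ε) :
    ∃ D ∈ T, hausdorffEdist D (⋂₀ T) < ε := by
  obtain ⟨δ, hδ0, hδtop, hδε⟩ := exists_small hε
  set Q := ⋂₀ T with hQ
  by_cases hex : ∃ D ∈ T, ∀ x ∈ D, infEdist x Q < δ
  · obtain ⟨D, hDT, hD⟩ := hex
    refine ⟨D, hDT, ?_⟩
    have hQD : Q ⊆ D := sInter_subset_of_mem hDT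
    have : hausdorffEdist D Q ≤ δ := by
      apply hausdorffEdist_le_of_infEdist
      · exact fun x hx => (hD x hx).le
      · intro x hx
        have : infEdist x D = 0 := infEdist_zero_of_mem (hQD hx)
        simp [show infEDist x D = 0 from this]
    calc hausdorffEdist D Q ≤ δ := this
      _ < ε := lt_of_le_of_lt (le_mul_of_one_le_left zero_le (by norm_num)) hδε
  · exfalso
    push_neg at hex
    have hne' : Nonempty T := hne.to_subtype
    have key := IsCompact.nonempty_iInter_of_directed_nonempty_isCompact_isClosed
      (ι := T) (fun A => (A : Set X) ∩ {x | δ ≤ infEdist x Q}) ?_ ?_ ?_ ?_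
    · obtain ⟨x, hx⟩ := key
      simp only [mem_iInter, mem_inter_iff, mem_setOf_eq] at hx
      have hxQ : x ∈ Q := by
        rw [hQ, mem_sInter]; exact fun A hA => (hx ⟨A, hA⟩).1
      have h0 : infEdist x Q = 0 := infEdist_zero_of_mem hxQ
      have hge := (hx ⟨hne.choose, hne.choose_spec⟩).2
      rw [h0] at hge
      exact hδ0.ne' (le_antisymm hge zero_le)
    · -- directed
      rintro ⟨A, hA⟩ ⟨B, hB⟩
      rcases hc.total hA hB with hsub | hsub
      · exact ⟨⟨A, hA⟩, inter_subset_inter_left _ subset_rfl,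
          inter_subset_inter_left _ hsub⟩
      · exact ⟨⟨B, hB⟩, inter_subset_inter_left _ hsub, inter_subset_inter_left _ subset_rfl⟩
    · -- nonempty
      rintro ⟨A, hA⟩
      obtain ⟨x, hxA, hxd⟩ := hex A hA
      exact ⟨x, hxA, hxd⟩
    · rintro ⟨A, hA⟩
      exact ((hcl A hA).isCompact).inter_right
        (isClosed_le continuous_const continuous_infEdist)
    · rintro ⟨A, hA⟩
      exact (hcl A hA).inter (isClosed_le continuous_const continuous_infEdist)

/-- The intersection of a chain of compact connected nonempty sets is preconnected. -/
lemma chainInter_preconn {T : Set (Set X)} (hne : T.Nonempty) (hc : IsChain (· ⊆ ·) T)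
    (hsub : ∀ A ∈ T, Sub A) : IsPreconnected (⋂₀ T) := by
  have hQcl : IsClosed (⋂₀ T) := isClosed_sInter (fun A hA => sub_closed (hsub A hA))
  rw [isPreconnected_iff_subset_of_fully_disjoint_closed hQcl]
  intro Z₁ Z₂ h₁ h₂ hcov hd
  by_cases hq2 : (⋂₀ T ∩ Z₂).Nonempty
  · by_cases hq1 : (⋂₀ T ∩ Z₁).Nonempty
    · exfalso
      obtain ⟨u, v, hu, hv, hZu, hZv, huv⟩ := NormalSpace.normal Z₁ Z₂ h₁ h₂ hd
      have hne' : Nonempty T := hne.to_subtype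
      by_cases hK : ∀ A : T, ((A : Set X) \ (u ∪ v)).Nonempty
      · have htd : Directed (· ⊇ ·) (fun A : T => (A : Set X) \ (u ∪ v)) := by
          rintro ⟨A, hA⟩ ⟨B, hB⟩
          rcases hc.total hA hB with hs | hs
          · exact ⟨⟨A, hA⟩, diff_subset_diff_left subset_rfl, diff_subset_diff_left hs⟩
          · exact ⟨⟨B, hB⟩, diff_subset_diff_left hs, diff_subset_diff_left subset_rfl⟩
        have htc : ∀ A : T, IsCompact ((A : Set X) \ (u ∪ v)) := by
          rintro ⟨A, hA⟩
          exact ((hsub A hA).2.1).inter_right (hu.union hv).isClosed_compl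
        have htcl : ∀ A : T, IsClosed ((A : Set X) \ (u ∪ v)) := by
          rintro ⟨A, hA⟩
          exact (sub_closed (hsub A hA)).inter (hu.union hv).isClosed_compl
        obtain ⟨x, hx⟩ := IsCompact.nonempty_iInter_of_directed_nonempty_isCompact_isClosed
          (ι := T) (fun A => (A : Set X) \ (u ∪ v)) htd hK htc htcl
        simp only [mem_iInter, mem_diff] at hx
        have hxQ : x ∈ ⋂₀ T := mem_sInter.2 fun A hA => (hx ⟨A, hA⟩).1
        have : x ∈ u ∪ v := union_subset_union hZu hZv (hcov hxQ)
        exact (hx ⟨hne.choose, hne.choose_spec⟩).2 this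
      · push_neg at hK
        obtain ⟨⟨A, hA⟩, hAe⟩ := hK
        simp only [Subtype.coe_mk] at hAe
        rw [diff_eq_empty] at hAe
        have hconn := (hsub A hA).2.2
        obtain ⟨x, hx⟩ := hconn u v hu hv hAe
          (hq1.mono (inter_subset_inter (sInter_subset_of_mem hA) hZu))
          (hq2.mono (inter_subset_inter (sInter_subset_of_mem hA) hZv))
        exact (Set.disjoint_left.1 huv hx.2.1) hx.2.2
    · right
      intro x hx
      rcases hcov hx with h | h
      · exact absurd ⟨x, hx, h⟩ hq1
      · exact h
  · left
    intro x hx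
    rcases hcov hx with h | h
    · exact h
    · exact absurd ⟨x, hx, h⟩ hq2

/-- Between two distinct nested subcontinua there is a strictly intermediate one. -/
lemma interm {A A' : Set X} (hA : Sub A) (hA' : Sub A') (hsub : A ⊆ A') (hne : A ≠ A') :
    ∃ R : Set X, Sub R ∧ A ⊆ R ∧ R ⊆ A' ∧ R ≠ A ∧ R ≠ A' := by
  obtain ⟨p, hpA', hpA⟩ := exists_of_ssubset ⟨hsub, fun h => hne (le_antisymm hsub h)⟩
  set δ := infEdist p A with hδdef
  have hδ0 : 0 < δ := infEdist_pos_of_not_mem (sub_closed hA) hpA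
  have hδtop : δ ≠ ⊤ := by
    obtain ⟨a, ha⟩ := hA.1
    exact (lt_of_le_of_lt (infEdist_le_edist_of_mem ha) (edist_lt_top p a)).ne
  set δ' := δ / 2 with hδ'def
  have hδ'0 : 0 < δ' := ENNReal.half_pos hδ0.ne'
  have hδ'δ : δ' < δ := ENNReal.half_lt_self hδ0.ne' hδtop
  set U : Set X := {x | infEdist x A < δ'} with hUdef
  have hUopen : IsOpen U := isOpen_lt continuous_infEdist continuous_const
  have hAU : A ⊆ U := fun x hx => by
    show infEDist x A < δ'; rw [infEDist_zero_of_mem hx]; exact hδ'0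
  set K : Set X := A' ∩ {x | infEdist x A ≤ δ'} with hKdef
  have hKcpt : IsCompact K := hA'.2.1.inter_right
    (isClosed_le continuous_infEdist continuous_const)
  have hKcl : IsClosed K := hKcpt.isClosed
  have hAK : A ⊆ K := fun x hx => ⟨hsub hx, by
    show infEDist x A ≤ δ'; rw [infEDist_zero_of_mem hx]; exact zero_le⟩
  have hpK : p ∉ K := fun hp => absurd hp.2 (by simp only [mem_setOf_eq, not_le, ← hδdef]; exact hδ'δ)
  obtain ⟨a, haA⟩ := hA.1
  have haK : a ∈ K := hAK haA
  -- the component of K containing a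
  set R : Set X := connectedComponentIn K a with hRdef
  have hRpre : IsPreconnected R := isPreconnected_connectedComponentIn
  have hRK : R ⊆ K := connectedComponentIn_subset K a
  have hAR : A ⊆ R := hA.2.2.subset_connectedComponentIn haA hAK
  -- R is compact, being closed in the compact subtype
  have hRcl : IsClosed R := by
    rw [hRdef, connectedComponentIn_eq_image haK]
    have : CompactSpace K := isCompact_iff_compactSpace.1 hKcpt
    have hclosed : IsClosed (connectedComponent (⟨a, haK⟩ : K)) := isClosed_connectedComponent
    have hcpt : IsCompact ((↑) '' connectedComponent (⟨a, haK⟩ : K) : Set X) :=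
      (hclosed.isCompact).image continuous_subtype_val
    exact hcpt.isClosed
  have hRcpt : IsCompact R := hRcl.isCompact
  -- R is not contained in U
  have hRnotU : ¬ R ⊆ U := by
    intro hRU
    have : CompactSpace K := isCompact_iff_compactSpace.1 hKcpt
    set a' : K := ⟨a, haK⟩ with ha'
    have hcc := connectedComponent_eq_iInter_isClopen a'
    set Z' : Set K := (↑) ⁻¹' Uᶜ with hZ'def
    have hZ'cl : IsClosed Z' := hUopen.isClosed_compl.preimage continuous_subtype_val
    have hccZ : (⋂ s : { s : Set K // IsClopen s ∧ a' ∈ s }, (s : Set K)) ∩ Z' = ∅ := by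
      rw [← hcc]
      apply eq_empty_of_forall_notMem
      rintro y ⟨hy1, hy2⟩
      apply hy2
      have : (y : X) ∈ R := by
        rw [hRdef, connectedComponentIn_eq_image haK]
        exact ⟨y, hy1, rfl⟩
      exact hRU this
    -- find one clopen set disjoint from Z'
    have hinst : Nonempty { s : Set K // IsClopen s ∧ a' ∈ s } :=
      ⟨⟨univ, isClopen_univ, mem_univ _⟩⟩
    by_cases hall : ∀ s : { s : Set K // IsClopen s ∧ a' ∈ s }, ((s : Set K) ∩ Z').Nonempty
    · exfalso
      have htd : Directed (· ⊇ ·) (fun s : { s : Set K // IsClopen s ∧ a' ∈ s } =>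
          (s : Set K) ∩ Z') := by
        rintro ⟨s, hs, has⟩ ⟨t, ht, hat⟩
        exact ⟨⟨s ∩ t, hs.inter ht, has, hat⟩,
          inter_subset_inter_left _ inter_subset_left,
          inter_subset_inter_left _ inter_subset_right⟩
      obtain ⟨y, hy⟩ := IsCompact.nonempty_iInter_of_directed_nonempty_isCompact_isClosed
        (fun s : { s : Set K // IsClopen s ∧ a' ∈ s } => (s : Set K) ∩ Z') htd hall
        (fun s => (IsClosed.isCompact s.2.1.1).inter_right hZ'cl)
        (fun s => s.2.1.1.inter hZ'cl)
      have hmem : y ∈ (⋂ s : { s : Set K // IsClopen s ∧ a' ∈ s }, (s : Set K)) ∩ Z' := by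
        simp only [mem_inter_iff, mem_iInter] at hy ⊢
        exact ⟨fun s => (hy s).1, (hy hinst.some).2⟩
      rw [hccZ] at hmem
      exact hmem
    · push_neg at hall
      obtain ⟨⟨s, hsclopen, has⟩, hse⟩ := hall
      have hsU : s ⊆ (↑) ⁻¹' U := by
        intro y hy
        by_contra hyU
        exact absurd (show y ∈ s ∩ Z' from ⟨hy, hyU⟩) (by
          intro hmem
          rw [show (⟨s, hsclopen, has⟩ : { s : Set K // IsClopen s ∧ a' ∈ s }).1 ∩ Z' = s ∩ Z' from rfl] at hse
          rw [hse] at hmem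
          exact notMem_empty y hmem)
      set D : Set X := (↑) '' s with hDdef
      have hDcl : IsClosed D :=
        ((IsClosed.isCompact hsclopen.1).image continuous_subtype_val).isClosed
      obtain ⟨O, hOopen, hOs⟩ := isOpen_induced_iff.1 hsclopen.2
      have hDeq : D = (O ∩ U) ∩ A' := by
        apply Subset.antisymm
        · rintro x ⟨y, hy, rfl⟩
          refine ⟨⟨?_, hsU hy⟩, y.2.1⟩
          rw [← hOs] at hy; exact hy
        · rintro x ⟨⟨hxO, hxU⟩, hxA'⟩
          have hxK : x ∈ K := ⟨hxA', le_of_lt (show infEdist x A < δ' from hxU)⟩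
          refine ⟨⟨x, hxK⟩, ?_, rfl⟩
          rw [← hOs]; exact hxO
      -- a' ∈ s gives a ∈ D; p ∉ D
      have haD : a ∈ D := ⟨a', has, rfl⟩
      have hpD : p ∉ D := fun hp => hpK (image_subset_iff.2 (fun y _ => y.2) hp)
      -- A' preconnected gives contradiction
      obtain ⟨x, hx⟩ := hA'.2.2 (O ∩ U) Dᶜ (hOopen.inter hUopen) hDcl.isOpen_compl
        (fun x hx => by
          by_cases hxd : x ∈ D
          · left; rw [hDeq] at hxd; exact hxd.1
          · right; exact hxd)
        ⟨a, hsub haA, by rw [hDeq] at haD; exact haD.1⟩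
        ⟨p, hpA', hpD⟩
      obtain ⟨hxA', hxOU, hxD⟩ := hx
      exact hxD (by rw [hDeq]; exact ⟨hxOU, hxA'⟩)
  -- conclude
  obtain ⟨r, hrR, hrU⟩ := not_subset.1 hRnotU
  have hrA : r ∉ A := fun h => hrU (hAU h)
  refine ⟨R, ⟨⟨a, hAR haA⟩, hRcpt, hRpre⟩, hAR, hRK.trans inter_subset_left, ?_, ?_⟩
  · intro h; rw [h] at hrR; exact hrA hrR
  · intro h; rw [h] at hRK; exact hpK (hRK hpA')

/-- Order segments: a connected set of subcontinua joining `E` to `F`. -/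
lemma segment (E F : Set X) (hE : Sub E) (hF : Sub F) (hEF : E ⊆ F) :
    ∃ S : Set (Hyp X), IsPreconnected S ∧ toHyp E hE ∈ S ∧ toHyp F hF ∈ S ∧
      ∀ A ∈ S, E ⊆ (A.1 : Set X) ∧ (A.1 : Set X) ⊆ F := by
  classical
  set 𝒮 : Set (Set X) := {A | Sub A ∧ E ⊆ A ∧ A ⊆ F} with h𝒮
  have hE𝒮 : E ∈ 𝒮 := ⟨hE, subset_rfl, hEF⟩
  have hF𝒮 : F ∈ 𝒮 := ⟨hF, hEF, subset_rfl⟩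
  set r : ↥𝒮 → ↥𝒮 → Prop := fun a b => (a : Set X) ⊆ (b : Set X) with hr
  have hc₀ : IsChain r {(⟨E, hE𝒮⟩ : ↥𝒮), ⟨F, hF𝒮⟩} := by
    rintro a (rfl | ha) b (rfl | hb) hab
    · exact absurd rfl hab
    · rw [mem_singleton_iff] at hb; subst hb; exact Or.inl hEF
    · rw [mem_singleton_iff] at ha; subst ha; exact Or.inr hEF
    · rw [mem_singleton_iff] at ha hb; subst ha; subst hb; exact absurd rfl hab
  obtain ⟨M, hM, hsubM⟩ := hc₀.exists_maxChain
  set 𝒞 : Set (Set X) := Subtype.val '' M with h𝒞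
  have hmem𝒮 : ∀ A ∈ 𝒞, Sub A ∧ E ⊆ A ∧ A ⊆ F := by
    rintro A ⟨⟨A', hA'⟩, _, rfl⟩; exact hA'
  have hchain : IsChain (· ⊆ ·) 𝒞 := by
    rintro A ⟨a, haM, rfl⟩ B ⟨b, hbM, rfl⟩ hAB
    exact hM.1 haM hbM (fun h => hAB (congrArg Subtype.val h))
  have hE𝒞 : E ∈ 𝒞 := ⟨⟨E, hE𝒮⟩, hsubM (mem_insert _ _), rfl⟩
  have hF𝒞 : F ∈ 𝒞 := ⟨⟨F, hF𝒮⟩, hsubM (mem_insert_of_mem _ (mem_singleton _)), rfl⟩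
  have key : ∀ R ∈ 𝒮, (∀ D ∈ 𝒞, D ⊆ R ∨ R ⊆ D) → R ∈ 𝒞 := by
    intro R hR hcomp
    by_contra hRnot
    have hins : IsChain r (insert ⟨R, hR⟩ M) := by
      apply hM.1.insert
      intro b hbM hne
      rcases hcomp (b : Set X) ⟨b, hbM, rfl⟩ with h | h
      · exact Or.inr h
      · exact Or.inl h
    have heq := hM.2 hins (subset_insert _ _)
    have : (⟨R, hR⟩ : ↥𝒮) ∈ M := by rw [heq]; exact mem_insert _ _
    exact hRnot ⟨_, this, rfl⟩
  have supMem : ∀ T ⊆ 𝒞, T.Nonempty → closure (⋃₀ T) ∈ 𝒞 := by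
    intro T hT hTne
    obtain ⟨e, he⟩ := hE.1
    have hsubP : Sub (closure (⋃₀ T)) := by
      refine ⟨?_, isClosed_closure.isCompact, ?_⟩
      · obtain ⟨A₀, hA₀⟩ := hTne
        obtain ⟨x, hx⟩ := (hmem𝒮 A₀ (hT hA₀)).1.1
        exact ⟨x, subset_closure (mem_sUnion_of_mem hx hA₀)⟩
      · exact (isPreconnected_sUnion e T
          (fun A hA => (hmem𝒮 A (hT hA)).2.1 he)
          (fun A hA => (hmem𝒮 A (hT hA)).1.2.2)).closure
    have hmemP : closure (⋃₀ T) ∈ 𝒮 := by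
      refine ⟨hsubP, ?_, ?_⟩
      · obtain ⟨A₀, hA₀⟩ := hTne
        exact ((hmem𝒮 A₀ (hT hA₀)).2.1).trans
          ((subset_sUnion_of_mem hA₀).trans subset_closure)
      · exact closure_minimal (sUnion_subset fun A hA => (hmem𝒮 A (hT hA)).2.2)
          (sub_closed hF)
    apply key _ hmemP
    intro D hD
    by_cases hall : ∀ A ∈ T, A ⊆ D
    · exact Or.inr (closure_minimal (sUnion_subset hall) (sub_closed (hmem𝒮 D hD).1))
    · push_neg at hall
      obtain ⟨A, hAT, hAD⟩ := hall
      rcases hchain.total (hT hAT) hD with h | h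
      · exact absurd h hAD
      · exact Or.inl (h.trans ((subset_sUnion_of_mem hAT).trans subset_closure))
  have infMem : ∀ T ⊆ 𝒞, T.Nonempty → ⋂₀ T ∈ 𝒞 := by
    intro T hT hTne
    have hEsub : E ⊆ ⋂₀ T := subset_sInter fun A hA => (hmem𝒮 A (hT hA)).2.1
    have hsubQ : Sub (⋂₀ T) := by
      refine ⟨hE.1.mono hEsub, ?_, ?_⟩
      · exact (isClosed_sInter fun A hA => sub_closed (hmem𝒮 A (hT hA)).1).isCompact
      · exact chainInter_preconn hTne (hchain.mono hT) (fun A hA => (hmem𝒮 A (hT hA)).1)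
    have hmemQ : ⋂₀ T ∈ 𝒮 := by
      refine ⟨hsubQ, hEsub, ?_⟩
      obtain ⟨A₀, hA₀⟩ := hTne
      exact (sInter_subset_of_mem hA₀).trans (hmem𝒮 A₀ (hT hA₀)).2.2
    apply key _ hmemQ
    intro D hD
    by_cases hall : ∀ A ∈ T, D ⊆ A
    · exact Or.inl (subset_sInter hall)
    · push_neg at hall
      obtain ⟨A, hAT, hDA⟩ := hall
      rcases hchain.total (hT hAT) hD with h | h
      · exact Or.inr ((sInter_subset_of_mem hAT).trans h)
      · exact absurd h hDA
  set S : Set (Hyp X) := {A | (A.1 : Set X) ∈ 𝒞} with hS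
  -- S is closed
  have hSclosedAux : closure S ⊆ S := by
    intro B hB
    have hap : ∀ ε : ℝ≥0∞, 0 < ε → ∃ D ∈ 𝒞, hausdorffEdist (B.1 : Set X) D < ε := by
      intro ε hε
      obtain ⟨C, hCS, hd⟩ := EMetric.mem_closure_iff.1 hB ε hε
      exact ⟨(C.1 : Set X), hCS, hd⟩
    have hcompar : ∀ D ∈ 𝒞, (B.1 : Set X) ⊆ D ∨ D ⊆ (B.1 : Set X) := by
      intro D hD
      by_contra hcon
      push_neg at hcon
      obtain ⟨a, haB, haD⟩ := not_subset.1 hcon.1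
      obtain ⟨d, hdD, hdB⟩ := not_subset.1 hcon.2
      have h1 : 0 < infEdist a D := infEdist_pos_of_not_mem (sub_closed (hmem𝒮 D hD).1) haD
      have h2 : 0 < infEdist d (B.1 : Set X) :=
        infEdist_pos_of_not_mem B.1.isCompact.isClosed hdB
      obtain ⟨D', hD'𝒞, hd'⟩ := hap _ (lt_min h1 h2)
      rcases hchain.total hD'𝒞 hD with h | h
      · have : infEdist a D < min (infEdist a D) (infEdist d (B.1 : Set X)) :=
          lt_of_le_of_lt (le_trans (infEdist_anti h) (infEdist_le_hausdorffEdist_of_mem haB)) hd'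
        exact absurd (this.trans_le (min_le_left _ _)) (lt_irrefl _)
      · have hdD' : d ∈ D' := h hdD
        have : infEdist d (B.1 : Set X) < min (infEdist a D) (infEdist d (B.1 : Set X)) := by
          rw [show hausdorffEdist (B.1 : Set X) D' = hausdorffEdist D' (B.1 : Set X) from hausdorffEDist_comm] at hd'
          exact lt_of_le_of_lt (infEdist_le_hausdorffEdist_of_mem hdD') hd'
        exact absurd (this.trans_le (min_le_right _ _)) (lt_irrefl _)
    have hEB : E ⊆ (B.1 : Set X) := by
      apply supset_of_approx B.1.isCompact.isClosed
      intro ε hε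
      obtain ⟨D, hD, hd⟩ := hap ε hε
      exact ⟨D, (hmem𝒮 D hD).2.1, hd⟩
    have hBF : (B.1 : Set X) ⊆ F := by
      apply subset_of_approx_sub (sub_closed hF)
      intro ε hε
      obtain ⟨D, hD, hd⟩ := hap ε hε
      exact ⟨D, (hmem𝒮 D hD).2.2, hd⟩
    set TP : Set (Set X) := {D | D ∈ 𝒞 ∧ D ⊆ (B.1 : Set X)} with hTP
    have hETP : E ∈ TP := ⟨hE𝒞, hEB⟩
    have hP𝒞 : closure (⋃₀ TP) ∈ 𝒞 := supMem TP (fun D hD => hD.1) ⟨E, hETP⟩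
    set P : Set X := closure (⋃₀ TP) with hPdef
    have hPB : P ⊆ (B.1 : Set X) :=
      closure_minimal (sUnion_subset fun D hD => hD.2) B.1.isCompact.isClosed
    set TQ : Set (Set X) := {D | D ∈ 𝒞 ∧ (B.1 : Set X) ⊆ D} with hTQ
    have hFTQ : F ∈ TQ := ⟨hF𝒞, hBF⟩
    have hQ𝒞 : ⋂₀ TQ ∈ 𝒞 := infMem TQ (fun D hD => hD.1) ⟨F, hFTQ⟩
    set Q : Set X := ⋂₀ TQ with hQdef
    have hBQ : (B.1 : Set X) ⊆ Q := subset_sInter fun D hD => hD.2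
    by_cases hPQ : P = Q
    · have hBP : (B.1 : Set X) = P := Subset.antisymm (hPQ ▸ hBQ) hPB
      show (B.1 : Set X) ∈ 𝒞
      rw [hBP]; exact hP𝒞
    · exfalso
      obtain ⟨R, hRsub, hPR, hRQ, hRneP, hRneQ⟩ :=
        interm (hmem𝒮 P hP𝒞).1 (hmem𝒮 Q hQ𝒞).1 (hPB.trans hBQ) hPQ
      have hR𝒮 : R ∈ 𝒮 := ⟨hRsub, (hmem𝒮 P hP𝒞).2.1.trans hPR, hRQ.trans (hmem𝒮 Q hQ𝒞).2.2⟩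
      have hR𝒞 : R ∈ 𝒞 := by
        apply key R hR𝒮
        intro D hD
        rcases hcompar D hD with hBD | hDB
        · exact Or.inr (hRQ.trans (sInter_subset_of_mem (show D ∈ TQ from ⟨hD, hBD⟩)))
        · exact Or.inl (((subset_sUnion_of_mem (show D ∈ TP from ⟨hD, hDB⟩)).trans subset_closure).trans hPR)
      rcases hcompar R hR𝒞 with hBR | hRB
      · exact hRneQ (Subset.antisymm hRQ (sInter_subset_of_mem (show R ∈ TQ from ⟨hR𝒞, hBR⟩)))
      · exact hRneP (Subset.antisymm
          ((subset_sUnion_of_mem (show R ∈ TP from ⟨hR𝒞, hRB⟩)).trans subset_closure) hPR)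
  have hSclosed : IsClosed S := isClosed_of_closure_subset hSclosedAux
  -- core separation argument
  have core : ∀ (Z W : Set (Hyp X)), IsClosed Z → IsClosed W → Disjoint Z W →
      S ⊆ Z ∪ W → ∀ (A₁ A₂ : Hyp X), A₁ ∈ S → A₂ ∈ S → A₁ ∈ Z → A₂ ∈ W →
      (A₁.1 : Set X) ⊆ (A₂.1 : Set X) → False := by
    intro Z W hZcl hWcl hd hcov A₁ A₂ hA₁S hA₂S hA₁Z hA₂W hsub12
    set D₁ : Set X := (A₁.1 : Set X) with hD₁def
    set D₂ : Set X := (A₂.1 : Set X) with hD₂def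
    set G : Set (Set X) := {D | D ∈ 𝒞 ∧ D₁ ⊆ D ∧ D ⊆ D₂ ∧ ∀ hs : Sub D, toHyp D hs ∈ W}
      with hGdef
    have hD₂G : D₂ ∈ G := ⟨hA₂S, hsub12, subset_rfl, fun hs => by
      have : toHyp D₂ hs = A₂ := hyp_ext rfl
      rw [this]; exact hA₂W⟩
    have hG𝒞 : G ⊆ 𝒞 := fun D hD => hD.1
    have hQ𝒞 : ⋂₀ G ∈ 𝒞 := infMem G hG𝒞 ⟨D₂, hD₂G⟩
    set Q : Set X := ⋂₀ G with hQdef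
    have hQsub : Sub Q := (hmem𝒮 Q hQ𝒞).1
    have hD₁Q : D₁ ⊆ Q := subset_sInter fun D hD => hD.2.1
    have hQD₂ : Q ⊆ D₂ := sInter_subset_of_mem hD₂G
    have hAQW : toHyp Q hQsub ∈ W := by
      rw [← hWcl.closure_eq]
      rw [EMetric.mem_closure_iff]
      intro ε hε
      obtain ⟨D, hDG, hdist⟩ := inf_approx ⟨D₂, hD₂G⟩ (hchain.mono hG𝒞)
        (fun A hA => sub_closed (hmem𝒮 A (hG𝒞 hA)).1) hε
      refine ⟨toHyp D (hmem𝒮 D (hG𝒞 hDG)).1, hDG.2.2.2 _, ?_⟩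
      show hausdorffEdist Q D < ε
      rwa [show hausdorffEdist Q D = hausdorffEdist D Q from hausdorffEDist_comm]
    have hQneD₁ : Q ≠ D₁ := by
      intro h
      have : toHyp Q hQsub = A₁ := hyp_ext h
      rw [this] at hAQW
      exact (disjoint_left.1 hd hA₁Z) hAQW
    set H : Set (Set X) := {D | D ∈ 𝒞 ∧ D₁ ⊆ D ∧ D ⊆ Q ∧ D ≠ Q} with hHdef
    have hD₁H : D₁ ∈ H := ⟨hA₁S, subset_rfl, hD₁Q, fun h => hQneD₁ h.symm⟩
    have hH𝒞 : H ⊆ 𝒞 := fun D hD => hD.1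
    have hP𝒞 : closure (⋃₀ H) ∈ 𝒞 := supMem H hH𝒞 ⟨D₁, hD₁H⟩
    set P : Set X := closure (⋃₀ H) with hPdef
    have hPsub : Sub P := (hmem𝒮 P hP𝒞).1
    have hPQ : P ⊆ Q := closure_minimal (sUnion_subset fun D hD => hD.2.2.1)
      (sub_closed hQsub)
    have hD₁P : D₁ ⊆ P := (subset_sUnion_of_mem hD₁H).trans subset_closure
    have hHZ : ∀ D ∈ H, ∀ hs : Sub D, toHyp D hs ∈ Z := by
      intro D hD hs
      rcases hcov (show toHyp D hs ∈ S from hD.1) with h | h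
      · exact h
      · exfalso
        have hDG : D ∈ G := ⟨hD.1, hD.2.1, hD.2.2.1.trans hQD₂, fun hs' => by
          have : toHyp D hs' = toHyp D hs := rfl
          rw [this]; exact h⟩
        exact hD.2.2.2 (Subset.antisymm hD.2.2.1 (sInter_subset_of_mem hDG))
    have hAPZ : toHyp P hPsub ∈ Z := by
      rw [← hZcl.closure_eq]
      rw [EMetric.mem_closure_iff]
      intro ε hε
      obtain ⟨D, hDH, hdist⟩ := sup_approx ⟨D₁, hD₁H⟩ (hchain.mono hH𝒞) hε
      refine ⟨toHyp D (hmem𝒮 D (hH𝒞 hDH)).1, hHZ D hDH _, ?_⟩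
      show hausdorffEdist P D < ε
      rwa [show hausdorffEdist P D = hausdorffEdist D P from hausdorffEDist_comm]
    have hPneQ : P ≠ Q := by
      intro h
      have : toHyp P hPsub = toHyp Q hQsub := hyp_ext h
      rw [this] at hAPZ
      exact (disjoint_left.1 hd hAPZ) hAQW
    obtain ⟨R, hRsub, hPR, hRQ, hRneP, hRneQ⟩ := interm hPsub hQsub hPQ hPneQ
    have hR𝒮 : R ∈ 𝒮 := ⟨hRsub, (hmem𝒮 P hP𝒞).2.1.trans hPR, hRQ.trans (hmem𝒮 Q hQ𝒞).2.2⟩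
    have hR𝒞 : R ∈ 𝒞 := by
      apply key R hR𝒮
      intro D hD
      rcases hchain.total hD hQ𝒞 with hDQ | hQD
      · rcases hchain.total hD hA₁S with hDD₁ | hD₁D
        · exact Or.inl (hDD₁.trans (hD₁P.trans hPR))
        · by_cases hDeq : D = Q
          · exact Or.inr (hDeq ▸ hRQ)
          · exact Or.inl (((subset_sUnion_of_mem (show D ∈ H from ⟨hD, hD₁D, hDQ, hDeq⟩)).trans
              subset_closure).trans hPR)
      · exact Or.inr (hRQ.trans hQD)
    have hRH : R ∈ H := ⟨hR𝒞, hD₁P.trans hPR, hRQ, hRneQ⟩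
    exact hRneP (Subset.antisymm
      ((subset_sUnion_of_mem hRH).trans subset_closure) hPR)
  have hSpre : IsPreconnected S := by
    rw [isPreconnected_iff_subset_of_fully_disjoint_closed hSclosed]
    intro Z W hZcl hWcl hcov hd
    by_contra hcon
    push_neg at hcon
    obtain ⟨hnZ, hnW⟩ := hcon
    obtain ⟨B₁, hB₁S, hB₁Z⟩ := not_subset.1 hnZ
    obtain ⟨B₂, hB₂S, hB₂W⟩ := not_subset.1 hnW
    have hB₁W : B₁ ∈ W := (hcov hB₁S).resolve_left hB₁Z
    have hB₂Z : B₂ ∈ Z := (hcov hB₂S).resolve_right hB₂W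
    rcases hchain.total (show (B₂.1 : Set X) ∈ 𝒞 from hB₂S)
        (show (B₁.1 : Set X) ∈ 𝒞 from hB₁S) with hsub | hsub
    · exact core Z W hZcl hWcl hd hcov B₂ B₁ hB₂S hB₁S hB₂Z hB₁W hsub
    · exact core W Z hWcl hZcl hd.symm (fun A hA => (hcov hA).symm) B₁ B₂ hB₁S hB₂S hB₁W hB₂Z hsub
  exact ⟨S, hSpre, hE𝒞, hF𝒞, fun A hA => ⟨(hmem𝒮 _ hA).2.1, (hmem𝒮 _ hA).2.2⟩⟩

lemma sub_singleton (b : X) : Sub ({b} : Set X) :=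
  ⟨singleton_nonempty b, isCompact_singleton, isPreconnected_singleton⟩

lemma continuous_singHyp : Continuous (singHyp : X → Hyp X) := by
  apply LipschitzWith.continuous (K := 1)
  apply LipschitzWith.of_edist_le
  intro x y
  have hle : hausdorffEdist ({x} : Set X) ({y} : Set X) ≤ edist x y := by
    apply hausdorffEdist_le_of_mem_edist
    · intro a ha
      rw [mem_singleton_iff] at ha; subst ha
      exact ⟨y, mem_singleton y, le_rfl⟩
    · intro a ha
      rw [mem_singleton_iff] at ha; subst ha
      exact ⟨x, mem_singleton x, le_of_eq (edist_comm a x)⟩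
  exact hle

lemma isOpen_hypSubsets {P : Set X} (hP : IsOpen P) :
    IsOpen {A : Hyp X | (A.1 : Set X) ⊆ P} := by
  rw [Metric.isOpen_iff]
  intro A hA
  obtain ⟨δ, hδ0, hδ⟩ := A.1.isCompact.exists_thickening_subset_open hP hA
  refine ⟨δ, hδ0, fun B hB => ?_⟩
  intro x hx
  apply hδ
  rw [mem_thickening_iff_infDist_lt A.1.nonempty]
  calc infDist x (A.1 : Set X) ≤ hausdorffDist (B.1 : Set X) (A.1 : Set X) :=
        infDist_le_hausdorffDist_of_mem hx
          (hausdorffEdist_ne_top_of_nonempty_of_bounded B.1.nonempty A.1.nonempty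
            B.1.isCompact.isBounded A.1.isCompact.isBounded)
    _ < δ := hB

/-- `C(X)` minus any point is preconnected: no point of the hyperspace is a cut point. -/
lemma compl_preconn [ConnectedSpace X] [Nontrivial X] (A₀ : Hyp X) :
    IsPreconnected ({A₀}ᶜ : Set (Hyp X)) := by
  obtain ⟨x₀⟩ := (inferInstance : Nonempty X)
  by_cases hsing : ((A₀.1 : Set X)).Subsingleton
  · -- A₀ is a singleton; anchor through the whole space
    have hAeq : ∃ a : X, (A₀.1 : Set X) = {a} := by
      rcases hsing.eq_empty_or_singleton with h | h
      · exact absurd h A₀.1.nonempty.ne_empty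
      · exact h
    have huniv : Sub (univ : Set X) := ⟨univ_nonempty, isCompact_univ, isPreconnected_univ⟩
    apply isPreconnected_of_forall (toHyp univ huniv)
    intro B hB
    obtain ⟨S, hSpre, hBS, hTS, hprop⟩ :=
      segment (B.1 : Set X) univ (hyp_sub B) huniv (subset_univ _)
    refine ⟨S, ?_, hTS, by rwa [show toHyp (B.1 : Set X) (hyp_sub B) = B from hyp_ext rfl]
      at hBS, hSpre⟩
    intro A hA
    simp only [mem_compl_iff, mem_singleton_iff]
    intro hAeq'
    obtain ⟨a, ha⟩ := hAeq
    have hBA : (B.1 : Set X) ⊆ (A₀.1 : Set X) := hAeq' ▸ (hprop A hA).1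
    rw [ha] at hBA
    have : (B.1 : Set X) = {a} := (B.1.nonempty.subset_singleton_iff).1 hBA
    exact hB (hyp_ext (by rw [this, ha]))
  · -- A₀ is not a singleton; anchor through the singletons
    have hsingne : ∀ x : X, singHyp x ≠ A₀ := by
      intro x h
      apply hsing
      rw [← h]
      exact subsingleton_singleton
    apply isPreconnected_of_forall (singHyp x₀)
    intro B hB
    have hF₁pre : IsPreconnected (range (singHyp : X → Hyp X)) :=
      isPreconnected_range continuous_singHyp
    by_cases hex : ∃ b ∈ (B.1 : Set X), b ∉ (A₀.1 : Set X)
    · obtain ⟨b, hbB, hbA₀⟩ := hex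
      obtain ⟨S₁, hS₁pre, hbS₁, hBS₁, hprop₁⟩ :=
        segment {b} (B.1 : Set X) (sub_singleton b) (hyp_sub B) (singleton_subset_iff.2 hbB)
      have hbr : singHyp b ∈ S₁ := by
        rwa [show toHyp ({b} : Set X) (sub_singleton b) = singHyp b from hyp_ext rfl] at hbS₁
      refine ⟨S₁ ∪ range singHyp, ?_, mem_union_right _ ⟨x₀, rfl⟩,
        mem_union_left _ (by rwa [show toHyp (B.1 : Set X) (hyp_sub B) = B from hyp_ext rfl]
          at hBS₁),
        IsPreconnected.union (singHyp b) hbr ⟨b, rfl⟩ hS₁pre hF₁pre⟩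
      rintro A (hA | ⟨x, rfl⟩)
      · simp only [mem_compl_iff, mem_singleton_iff]
        intro hAeq'
        have : ({b} : Set X) ⊆ (A.1 : Set X) := (hprop₁ A hA).1
        rw [hAeq'] at this
        exact hbA₀ (this rfl)
      · exact hsingne x
    · push_neg at hex
      obtain ⟨b, hbB⟩ := B.1.nonempty
      obtain ⟨S₁, hS₁pre, hbS₁, hBS₁, hprop₁⟩ :=
        segment {b} (B.1 : Set X) (sub_singleton b) (hyp_sub B) (singleton_subset_iff.2 hbB)
      have hbr : singHyp b ∈ S₁ := by
        rwa [show toHyp ({b} : Set X) (sub_singleton b) = singHyp b from hyp_ext rfl] at hbS₁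
      refine ⟨S₁ ∪ range singHyp, ?_, mem_union_right _ ⟨x₀, rfl⟩,
        mem_union_left _ (by rwa [show toHyp (B.1 : Set X) (hyp_sub B) = B from hyp_ext rfl]
          at hBS₁),
        IsPreconnected.union (singHyp b) hbr ⟨b, rfl⟩ hS₁pre hF₁pre⟩
      rintro A (hA | ⟨x, rfl⟩)
      · simp only [mem_compl_iff, mem_singleton_iff]
        intro hAeq'
        have hsub1 : (A.1 : Set X) ⊆ (B.1 : Set X) := (hprop₁ A hA).2
        rw [hAeq'] at hsub1
        have : (B.1 : Set X) = (A₀.1 : Set X) := Subset.antisymm hex hsub1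
        exact hB (hyp_ext this)
      · exact hsingne x

end Stmt7Aux

theorem stmt7 [CompactSpace X] [ConnectedSpace X] [Nontrivial X] (p : X) (h : Nonempty (Hyp X ≃ₜ HS p)) :
    IsConnected ({p}ᶜ : Set X) := by
  classical
  open Stmt7Aux Metric EMetric in
  obtain ⟨h⟩ := h
  obtain ⟨q, hq⟩ := exists_ne p
  refine ⟨⟨q, hq⟩, ?_⟩
  by_contra hnc
  rw [IsPreconnected] at hnc
  push_neg at hnc
  obtain ⟨u, v, hu, hv, hcover, hne1, hne2, hint⟩ := hnc
  set P : Set X := u ∩ {p}ᶜ with hPdef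
  set Q : Set X := v ∩ {p}ᶜ with hQdef
  have hPopen : IsOpen P := hu.inter isOpen_compl_singleton
  have hQopen : IsOpen Q := hv.inter isOpen_compl_singleton
  have hPQ : P ∩ Q = ∅ := by
    apply eq_empty_of_forall_notMem
    rintro x ⟨⟨hxu, hxp⟩, hxv, -⟩
    have : x ∈ ({p}ᶜ : Set X) ∩ (u ∩ v) := ⟨hxp, hxu, hxv⟩
    rw [hint] at this
    exact this
  have hPQcover : ({p}ᶜ : Set X) ⊆ P ∪ Q := by
    intro x hx
    rcases hcover hx with h' | h'
    · exact Or.inl ⟨h', hx⟩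
    · exact Or.inr ⟨h', hx⟩
  -- the two open pieces of HS p minus the distinguished point
  set WP : Set (HS p) := {z | ∃ A : Hyp X, hsMk p A = z ∧ (A.1 : Set X) ⊆ P} with hWP
  set WQ : Set (HS p) := {z | ∃ A : Hyp X, hsMk p A = z ∧ (A.1 : Set X) ⊆ Q} with hWQ
  have hpre : ∀ (W : Set (HS p)) (R : Set X), R ⊆ ({p}ᶜ : Set X) →
      W = {z | ∃ A : Hyp X, hsMk p A = z ∧ (A.1 : Set X) ⊆ R} →
      hsMk p ⁻¹' W = {A : Hyp X | (A.1 : Set X) ⊆ R} := by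
    intro W R hR hWdef
    ext A
    simp only [hWdef, mem_preimage, mem_setOf_eq]
    constructor
    · rintro ⟨A', hA'eq, hA'R⟩
      have hrel := Quotient.exact hA'eq
      rcases hrel with rfl | ⟨hA'Cp, hACp⟩
      · exact hA'R
      · exact absurd (hR (hA'R hA'Cp)) (fun hc => hc rfl)
    · intro hAR
      exact ⟨A, rfl, hAR⟩
  have hWPopen : IsOpen WP := by
    rw [show WP = WP from rfl, isOpen_coinduced (f := Quotient.mk (hsSetoid p))]
    rw [show Quotient.mk (hsSetoid p) ⁻¹' WP = hsMk p ⁻¹' WP from rfl,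
      hpre WP P inter_subset_right rfl]
    exact isOpen_hypSubsets hPopen
  have hWQopen : IsOpen WQ := by
    rw [isOpen_coinduced (f := Quotient.mk (hsSetoid p))]
    rw [show Quotient.mk (hsSetoid p) ⁻¹' WQ = hsMk p ⁻¹' WQ from rfl,
      hpre WQ Q inter_subset_right rfl]
    exact isOpen_hypSubsets hQopen
  -- the complement of the distinguished point is covered by WP ∪ WQ
  have hcup : ({CpPoint p}ᶜ : Set (HS p)) ⊆ WP ∪ WQ := by
    intro z hz
    obtain ⟨A, hA⟩ := Quotient.exists_rep z
    have hpA : p ∉ (A.1 : Set X) := by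
      intro hp
      apply hz
      rw [mem_singleton_iff, ← hA]
      exact Quotient.sound (Or.inr ⟨hp, rfl⟩)
    have hAsub : (A.1 : Set X) ⊆ P ∪ Q := by
      intro x hx
      have hxp : x ∈ ({p}ᶜ : Set X) := by
        intro hxmem
        rw [mem_singleton_iff] at hxmem
        rw [hxmem] at hx
        exact hpA hx
      exact hPQcover hxp
    by_cases hAQ : ((A.1 : Set X) ∩ Q).Nonempty
    · by_cases hAP : ((A.1 : Set X) ∩ P).Nonempty
      · exfalso
        obtain ⟨x, hx⟩ := A.2.2 P Q hPopen hQopen hAsub hAP hAQ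
        have : x ∈ P ∩ Q := hx.2
        rw [hPQ] at this
        exact this
      · right
        refine ⟨A, hA, ?_⟩
        intro x hx
        rcases hAsub hx with h' | h'
        · exact absurd ⟨x, hx, h'⟩ hAP
        · exact h'
    · left
      refine ⟨A, hA, ?_⟩
      intro x hx
      rcases hAsub hx with h' | h'
      · exact h'
      · exact absurd ⟨x, hx, h'⟩ hAQ
  -- nonemptiness of the two pieces off the distinguished point
  have hsingmem : ∀ (R : Set X) (W : Set (HS p)), R ⊆ ({p}ᶜ : Set X) →
      W = {z | ∃ A : Hyp X, hsMk p A = z ∧ (A.1 : Set X) ⊆ R} →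
      ∀ x ∈ R, hsMk p (singHyp x) ∈ ({CpPoint p}ᶜ : Set (HS p)) ∩ W := by
    intro R W hR hWdef x hx
    have hxp : x ≠ p := fun hc => (hR hx) (by rw [hc]; rfl)
    constructor
    · intro hc
      rw [mem_singleton_iff] at hc
      rcases Quotient.exact hc with heq | ⟨h1, _⟩
      · exact hxp (by
          have := congrArg (fun A : Hyp X => (A.1 : Set X)) heq
          simpa [singHyp] using this)
      · exact hxp (mem_singleton_iff.1 h1).symm
    · rw [hWdef]
      exact ⟨singHyp x, rfl, singleton_subset_iff.2 hx⟩
  obtain ⟨x₁, hx₁⟩ := hne1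
  obtain ⟨x₂, hx₂⟩ := hne2
  have hx₁P : x₁ ∈ P := ⟨hx₁.2, hx₁.1⟩
  have hx₂Q : x₂ ∈ Q := ⟨hx₂.2, hx₂.1⟩
  -- transport connectedness of Hyp X minus a point through the homeomorphism
  set A₀ : Hyp X := h.symm (CpPoint p) with hA₀def
  have hpre' : IsPreconnected ({A₀}ᶜ : Set (Hyp X)) := compl_preconn A₀
  have himg : IsPreconnected ({CpPoint p}ᶜ : Set (HS p)) := by
    have := hpre'.image h h.continuous.continuousOn
    rwa [Set.image_compl_eq h.bijective, image_singleton, h.apply_symm_apply] at this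
  obtain ⟨z, hz⟩ := himg WP WQ hWPopen hWQopen hcup
    ⟨hsMk p (singHyp x₁), (hsingmem P WP inter_subset_right rfl x₁ hx₁P).1,
      (hsingmem P WP inter_subset_right rfl x₁ hx₁P).2⟩
    ⟨hsMk p (singHyp x₂), (hsingmem Q WQ inter_subset_right rfl x₂ hx₂Q).1,
      (hsingmem Q WQ inter_subset_right rfl x₂ hx₂Q).2⟩
  obtain ⟨hzc, ⟨A₁, hA₁z, hA₁P⟩, ⟨A₂, hA₂z, hA₂Q⟩⟩ := hz
  rw [← hA₂z] at hA₁z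
  rcases Quotient.exact hA₁z with rfl | ⟨h1, h2⟩
  · obtain ⟨x, hx⟩ := A₁.1.nonempty
    have : x ∈ P ∩ Q := ⟨hA₁P hx, hA₂Q hx⟩
    rw [hPQ] at this
    exact this
  · exact (hA₁P h1).2 rfl
end

section
/- Let X be a continuum with the property of Kelley and suppose there exist distinct points p, q ∈ X such that HS(p,X) and HS(q,X) are locally connected. Then X is locally connected. -/
open TopologicalSpace Set

variable {X : Type*} [MetricSpace X]

/-- If `dist A B < δ` in the hyperspace, every point of `A` is `δ`-close to a point of `B`. -/
lemma dist_point_aux {A B : Hyp X} {δ : ℝ} (h : dist A B < δ) {a : X}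
    (ha : a ∈ (A.1 : Set X)) : ∃ b ∈ (B.1 : Set X), dist a b < δ := by
  have hfin : EMetric.hausdorffEdist (A.1 : Set X) (B.1 : Set X) ≠ ⊤ :=
    Metric.hausdorffEdist_ne_top_of_nonempty_of_bounded A.1.nonempty B.1.nonempty
      A.1.isCompact.isBounded B.1.isCompact.isBounded
  have h1 : Metric.infDist a (B.1 : Set X) < δ :=
    lt_of_le_of_lt (Metric.infDist_le_hausdorffDist_of_mem ha hfin)
      (by rw [Subtype.dist_eq, Metric.NonemptyCompacts.dist_eq] at h; exact h)
  exact (Metric.infDist_lt_iff B.1.nonempty).mp h1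

/-- The collection of subcontinua contained in a fixed open set is open in the hyperspace. -/
lemma isOpen_subsets_hyp {u : Set X} (hu : IsOpen u) :
    IsOpen {A : Hyp X | (A.1 : Set X) ⊆ u} := by
  rw [Metric.isOpen_iff]
  intro A hA
  obtain ⟨δ, hδpos, hδ⟩ := A.1.isCompact.exists_thickening_subset_open hu hA
  refine ⟨δ, hδpos, fun B hB => ?_⟩
  intro b hb
  obtain ⟨a, ha, hab⟩ := dist_point_aux (Metric.mem_ball.mp hB) hb
  exact hδ (Metric.mem_thickening_iff.mpr ⟨a, ha, hab⟩)

lemma aux_locConn (r x : X) (hx : x ≠ r) (hr : LocallyConnectedSpace (HS r)) {ε : ℝ}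
    (hε : 0 < ε) : ∃ V ∈ nhds x, IsPreconnected V ∧ V ⊆ Metric.ball x ε := by
  classical
  set π : Hyp X → HS r := hsMk r with hπ
  have hπcont : Continuous π := continuous_quot_mk
  have hqm : Topology.IsQuotientMap π := isQuotientMap_quot_mk
  set 𝒰 : Set (Hyp X) := {A : Hyp X | (A.1 : Set X) ⊆ ({r} : Set X)ᶜ} with h𝒰
  have h𝒰open : IsOpen 𝒰 := isOpen_subsets_hyp isClosed_singleton.isOpen_compl
  -- saturation of subsets of 𝒰
  have hsat : ∀ s : Set (Hyp X), s ⊆ 𝒰 → π ⁻¹' (π '' s) = s := by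
    intro s hs
    ext A
    constructor
    · rintro ⟨B, hB, hBA⟩
      have hrel := Quotient.exact hBA
      rcases hrel with rfl | ⟨hB', _⟩
      · exact hB
      · exact absurd rfl ((hs hB) hB')
    · intro h; exact ⟨A, h, rfl⟩
  have hinj : ∀ A ∈ 𝒰, ∀ B ∈ 𝒰, π A = π B → A = B := by
    intro A hA B hB hAB
    rcases Quotient.exact hAB with h | ⟨hA', _⟩
    · exact h
    · exact absurd rfl (hA hA')
  have hopenim : ∀ s : Set (Hyp X), s ⊆ 𝒰 → IsOpen s → IsOpen (π '' s) := by
    intro s hs hso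
    rw [← hqm.isOpen_preimage, hsat s hs]
    exact hso
  -- the basic open set around the singleton {x}
  have hxsing : singHyp x ∈ 𝒰 := by
    intro a ha
    rcases ha with rfl
    simpa using hx
  set 𝒪 : Set (Hyp X) := Metric.ball (singHyp x) ε ∩ 𝒰 with h𝒪
  have h𝒪open : IsOpen 𝒪 := Metric.isOpen_ball.inter h𝒰open
  have h𝒪sub : 𝒪 ⊆ 𝒰 := inter_subset_right
  have hx𝒪 : singHyp x ∈ 𝒪 := ⟨Metric.mem_ball_self hε, hxsing⟩
  have himopen : IsOpen (π '' 𝒪) := hopenim 𝒪 h𝒪sub h𝒪open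
  obtain ⟨W, hWsub, hWopen, hWmem, hWconn⟩ :=
    locallyConnectedSpace_iff_subsets_isOpen_isConnected.mp hr (π (singHyp x)) (π '' 𝒪)
      (himopen.mem_nhds (mem_image_of_mem π hx𝒪))
  set V' : Set (Hyp X) := π ⁻¹' W with hV'
  have hV'open : IsOpen V' := hWopen.preimage hπcont
  have hV'sub : V' ⊆ 𝒪 := by
    intro A hA
    obtain ⟨B, hB𝒪, hBA⟩ := hWsub hA
    rcases Quotient.exact hBA with rfl | ⟨hB', _⟩
    · exact hB𝒪
    · exact absurd rfl ((h𝒪sub hB𝒪) hB')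
  have hxV' : singHyp x ∈ V' := hWmem
  -- V' is preconnected (it is homeomorphic to W through π)
  have hV'pre : IsPreconnected V' := by
    intro u v hu hv hcov ⟨a, haV, hau⟩ ⟨b, hbV, hbv⟩
    have hVu : IsOpen (π '' (V' ∩ u)) :=
      hopenim _ (fun A hA => h𝒪sub (hV'sub hA.1)) (hV'open.inter hu)
    have hVv : IsOpen (π '' (V' ∩ v)) :=
      hopenim _ (fun A hA => h𝒪sub (hV'sub hA.1)) (hV'open.inter hv)
    have hWcov : W ⊆ π '' (V' ∩ u) ∪ π '' (V' ∩ v) := by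
      intro w hw
      obtain ⟨B, hB𝒪, hBw⟩ := hWsub hw
      have hBV : B ∈ V' := by rw [hV', mem_preimage, hBw]; exact hw
      rcases hcov hBV with h | h
      · exact Or.inl ⟨B, ⟨hBV, h⟩, hBw⟩
      · exact Or.inr ⟨B, ⟨hBV, h⟩, hBw⟩
    obtain ⟨w, hwW, ⟨A, hA, hAw⟩, ⟨B, hB, hBw⟩⟩ :=
      hWconn.isPreconnected _ _ hVu hVv hWcov
        ⟨π a, haV, mem_image_of_mem π ⟨haV, hau⟩⟩
        ⟨π b, hbV, mem_image_of_mem π ⟨hbV, hbv⟩⟩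
    have hAB : A = B :=
      hinj A (h𝒪sub (hV'sub hA.1)) B (h𝒪sub (hV'sub hB.1)) (by rw [hAw, hBw])
    exact ⟨A, hA.1, hA.2, hAB ▸ hB.2⟩
  -- now take the union of the continua in V'
  set S : Set X := ⋃ A ∈ V', (A.1 : Set X) with hS
  have hSnhds : S ∈ nhds x := by
    obtain ⟨δ, hδpos, hδ⟩ := Metric.isOpen_iff.mp hV'open (singHyp x) hxV'
    refine Filter.mem_of_superset (Metric.ball_mem_nhds x hδpos) ?_
    intro y hy
    have hdist : dist (singHyp y) (singHyp x) < δ := by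
      rw [Subtype.dist_eq, Metric.NonemptyCompacts.dist_eq]
      refine lt_of_le_of_lt (Metric.hausdorffDist_le_of_mem_dist dist_nonneg ?_ ?_)
        (Metric.mem_ball.mp hy)
      · rintro z rfl; exact ⟨x, rfl, le_refl _⟩
      · rintro z rfl; exact ⟨y, rfl, by rw [dist_comm]⟩
    exact mem_biUnion (hδ (Metric.mem_ball.mpr hdist)) rfl
  have hSsub : S ⊆ Metric.ball x ε := by
    intro a ha
    obtain ⟨A, hAV, haA⟩ := mem_iUnion₂.mp ha
    obtain ⟨b, hb, hab⟩ := dist_point_aux (Metric.mem_ball.mp (hV'sub hAV).1) haA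
    rcases hb with rfl
    exact Metric.mem_ball.mpr hab
  have hSpre : IsPreconnected S := by
    intro u v hu hv hcov ⟨a, haS, hau⟩ ⟨b, hbS, hbv⟩
    by_contra hne
    have hempty : S ∩ (u ∩ v) = ∅ := not_nonempty_iff_eq_empty.mp hne
    have hdich : ∀ A ∈ V', (A.1 : Set X) ⊆ u ∨ (A.1 : Set X) ⊆ v := by
      intro A hAV
      have hAsub : (A.1 : Set X) ⊆ S := subset_biUnion_of_mem (u := fun A : Hyp X => (A.1 : Set X)) hAV
      rcases ((A.1 : Set X) ∩ u).eq_empty_or_nonempty with he | hne'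
      · right; intro z hz
        rcases hcov (hAsub hz) with h | h
        · exact absurd (mem_inter hz h) (by rw [he]; exact notMem_empty z)
        · exact h
      · rcases ((A.1 : Set X) ∩ v).eq_empty_or_nonempty with he | hne''
        · left; intro z hz
          rcases hcov (hAsub hz) with h | h
          · exact h
          · exact absurd (mem_inter hz h) (by rw [he]; exact notMem_empty z)
        · exfalso
          obtain ⟨z, hz⟩ := A.2.isPreconnected u v hu hv (hAsub.trans hcov) hne' hne''
          have : z ∈ S ∩ (u ∩ v) := ⟨hAsub hz.1, hz.2⟩
          rw [hempty] at this; exact notMem_empty z this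
    have hOu : IsOpen {A : Hyp X | (A.1 : Set X) ⊆ u} := isOpen_subsets_hyp hu
    have hOv : IsOpen {A : Hyp X | (A.1 : Set X) ⊆ v} := isOpen_subsets_hyp hv
    -- witnesses
    obtain ⟨A₀, hA₀V, haA₀⟩ := mem_iUnion₂.mp haS
    have hA₀u : A₀ ∈ {A : Hyp X | (A.1 : Set X) ⊆ u} := by
      rcases hdich A₀ hA₀V with h | h
      · exact h
      · exfalso
        have : a ∈ S ∩ (u ∩ v) := ⟨haS, hau, h haA₀⟩
        rw [hempty] at this; exact notMem_empty a this
    obtain ⟨B₀, hB₀V, hbB₀⟩ := mem_iUnion₂.mp hbS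
    have hB₀v : B₀ ∈ {A : Hyp X | (A.1 : Set X) ⊆ v} := by
      rcases hdich B₀ hB₀V with h | h
      · exfalso
        have : b ∈ S ∩ (u ∩ v) := ⟨hbS, h hbB₀, hbv⟩
        rw [hempty] at this; exact notMem_empty b this
      · exact h
    obtain ⟨C, hCV, hCu, hCv⟩ := hV'pre _ _ hOu hOv hdich ⟨A₀, hA₀V, hA₀u⟩ ⟨B₀, hB₀V, hB₀v⟩
    obtain ⟨z, hz⟩ := C.1.nonempty
    have : z ∈ S ∩ (u ∩ v) := ⟨mem_biUnion hCV hz, hCu hz, hCv hz⟩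
    rw [hempty] at this; exact notMem_empty z this
  exact ⟨S, hSnhds, hSpre, hSsub⟩

theorem stmt16 [CompactSpace X] [ConnectedSpace X] [Nontrivial X]
    (kelley : ∀ ε > (0:ℝ), ∃ δ > (0:ℝ), ∀ a b : X, dist a b < δ →
      ∀ A : Hyp X, a ∈ (A.1 : Set X) → ∃ B : Hyp X, b ∈ (B.1 : Set X) ∧ dist A B < ε)
    (p q : X) (hpq : p ≠ q)
    (hp : LocallyConnectedSpace (HS p)) (hq : LocallyConnectedSpace (HS q)) :
    LocallyConnectedSpace X := by
  rw [locallyConnectedSpace_iff_connected_subsets]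
  intro x U hU
  obtain ⟨ε, hε, hball⟩ := Metric.nhds_basis_ball.mem_iff.mp hU
  by_cases hxp : x = p
  · obtain ⟨V, hV, hc, hsub⟩ := aux_locConn q x (hxp ▸ hpq) hq hε
    exact ⟨V, hV, hc, hsub.trans hball⟩
  · obtain ⟨V, hV, hc, hsub⟩ := aux_locConn p x hxp hp hε
    exact ⟨V, hV, hc, hsub.trans hball⟩
end
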